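/- arXiv:math/0302043 — 13 statements merged into one kernel-verified Lean document; each statement's English description precedes it below -/
import Mathlib

section
/- Let $n \ge 1$ and let $M$ be the $(2^n-1)\times(2^n-1)$ Boolean matrix indexed by nonempty subsets $S,T$ of $\{1,\dots,n\}$, with $m_{S,T}=1$ if $S\cap T\neq\emptyset$ and $m_{S,T}=0$ otherwise. Then $M$ is invertible over $\mathbb{Q}$. -/
open Finset

/-- The intersection-incidence matrix on nonempty subsets of `{1,…,n}` is
invertible over `ℚ`. -/
theorem intersection_matrix_invertible (n : ℕ) (hn : 1 ≤ n)
    (M : Matrix {S : Finset (Fin n) // S.Nonempty} {S : Finset (Fin n) // S.Nonempty} ℚ)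
    (hM : ∀ S T : {S : Finset (Fin n) // S.Nonempty},
      M S T = if (S.1 ∩ T.1).Nonempty then 1 else 0) :
    IsUnit M := by
  rw [Matrix.isUnit_iff_isUnit_det, isUnit_iff_ne_zero]
  intro hdet
  rw [← Matrix.exists_mulVec_eq_zero_iff] at hdet
  obtain ⟨v, hv, hmv⟩ := hdet
  apply hv
  -- define an extension of v to all finsets
  set f : Finset (Fin n) → ℚ := fun A => if h : A.Nonempty then v ⟨A, h⟩ else 0 with hf
  have hfe : f ∅ = 0 := by simp [hf]
  -- convert the subtype sum into a sum over all finsets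
  have h1 : ∀ S : Finset (Fin n), S.Nonempty →
      ∑ T : Finset (Fin n), (if (S ∩ T).Nonempty then f T else 0) = 0 := by
    intro S hS
    have h0 := congrFun hmv ⟨S, hS⟩
    simp only [Matrix.mulVec, dotProduct, hM, Pi.zero_apply, ite_mul, one_mul,
      zero_mul] at h0
    rw [← Fintype.sum_subtype_add_sum_subtype (fun A : Finset (Fin n) => A.Nonempty)
      (fun T => if (S ∩ T).Nonempty then f T else 0)]
    rw [Finset.sum_eq_zero (s := (univ : Finset {x : Finset (Fin n) // ¬x.Nonempty}))
      (by intro x _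
          have : x.1 = ∅ := Finset.not_nonempty_iff_eq_empty.mp x.2
          simp [this, hfe]), add_zero]
    have hsum : ∑ T : {S : Finset (Fin n) // S.Nonempty},
        (if (S ∩ T.1).Nonempty then f T.1 else 0)
        = ∑ x : {S : Finset (Fin n) // S.Nonempty},
          (if (S ∩ x.1).Nonempty then v x else 0) := by
      apply Finset.sum_congr rfl
      intro T _
      by_cases h : (S ∩ T.1).Nonempty
      · simp only [h, if_true, hf]
        rw [dif_pos T.2]
      · simp only [h, if_false]
    rw [hsum]
    exact h0
  -- the constant: sum over all finsets
  set C : ℚ := ∑ T : Finset (Fin n), f T with hC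
  have hpow : ∀ S : Finset (Fin n),
      (univ : Finset (Finset (Fin n))).filter (fun T => ¬(S ∩ T).Nonempty) = Sᶜ.powerset := by
    intro S
    ext T
    simp only [Finset.mem_filter, Finset.mem_univ, true_and, Finset.mem_powerset,
      Finset.not_nonempty_iff_eq_empty]
    constructor
    · intro h x hx
      simp only [Finset.mem_compl]
      intro hxS
      have : x ∈ S ∩ T := Finset.mem_inter.mpr ⟨hxS, hx⟩
      simp [h] at this
    · intro h
      rw [← Finset.disjoint_iff_inter_eq_empty]
      exact Finset.disjoint_left.mpr fun x hxS hxT => (Finset.mem_compl.mp (h hxT)) hxS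
  have h2 : ∀ S : Finset (Fin n), S.Nonempty → ∑ T ∈ Sᶜ.powerset, f T = C := by
    intro S hS
    have key : C = ∑ T : Finset (Fin n), ((if (S ∩ T).Nonempty then f T else 0)
        + (if ¬(S ∩ T).Nonempty then f T else 0)) := by
      apply Finset.sum_congr rfl
      intro T _
      by_cases h : (S ∩ T).Nonempty <;> simp [h]
    rw [Finset.sum_add_distrib, h1 S hS, zero_add, ← Finset.sum_filter, hpow] at key
    exact key.symm
  have hCzero : C = 0 := by
    haveI : Nonempty (Fin n) := ⟨⟨0, hn⟩⟩
    have huniv : (univ : Finset (Fin n)).Nonempty := Finset.univ_nonempty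
    have := h2 univ huniv
    rw [Finset.compl_univ, Finset.powerset_empty, Finset.sum_singleton, hfe] at this
    exact this.symm
  have h4 : ∀ A : Finset (Fin n), ∑ T ∈ A.powerset, f T = 0 := by
    intro A
    by_cases hA : A = univ
    · rw [hA, Finset.powerset_univ, ← hCzero, hC]
    · have hAc : Aᶜ.Nonempty := by
        rw [Finset.nonempty_iff_ne_empty]
        intro h
        exact hA (by simpa using congrArg compl h)
      have := h2 Aᶜ hAc
      rwa [compl_compl, hCzero] at this
  have h5 : ∀ A : Finset (Fin n), f A = 0 := by
    intro A
    induction A using Finset.strongInduction with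
    | _ A ih =>
      have hA := h4 A
      rw [← Finset.add_sum_erase _ f (Finset.mem_powerset_self A)] at hA
      rw [Finset.sum_eq_zero (fun T hT => by
        rcases Finset.mem_erase.mp hT with ⟨hne, hsub⟩
        exact ih T (lt_of_le_of_ne (Finset.mem_powerset.mp hsub) hne)), add_zero] at hA
      exact hA
  funext T
  have := h5 T.1
  simpa [hf, T.2] using this
end

section
/- Let $M$ be the matrix indexed by nonempty subsets $S,T\subseteq\{1,\dots,n\}$ with $m_{S,T}=1$ iff $S\cap T\neq\emptyset$. Then every entry of $M^{-1}$ lies in $\{-1,0,1\}$; in particular, for any integer vector $r$ the system $Mx=r$ has a unique integral solution. -/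
open Finset

private lemma pow_sum_q {α : Type*} [DecidableEq α] (A : Finset α) :
    (∑ B ∈ A.powerset, (-1 : ℚ) ^ B.card) = if A = ∅ then 1 else 0 := by
  have h := Finset.sum_powerset_neg_one_pow_card (x := A)
  have : ((∑ B ∈ A.powerset, (-1 : ℤ) ^ B.card : ℤ) : ℚ)
      = ∑ B ∈ A.powerset, (-1 : ℚ) ^ B.card := by push_cast; rfl
  rw [← this, h]
  split <;> norm_num

private lemma compl_ss_comm {α : Type*} [Fintype α] [DecidableEq α] {s t : Finset α} :
    sᶜ ⊆ t ↔ tᶜ ⊆ s := by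
  constructor <;> intro h x hx <;> by_contra hxs <;>
    exact (Finset.mem_compl.mp hx) (h (Finset.mem_compl.mpr hxs))

private lemma key_sum (n : ℕ) (S U : Finset (Fin n)) (hS : S.Nonempty) (hU : U.Nonempty) :
    (∑ T : Finset (Fin n), (if (S ∩ T).Nonempty then (1 : ℚ) else 0) *
      (if Uᶜ ⊆ T then (-1 : ℚ) ^ ((T ∩ U).card + 1) else 0))
    = if S = U then 1 else 0 := by
  classical
  -- restrict to T containing Uᶜ and reindex by B = T ∩ U ⊆ U
  have h1 : (∑ T : Finset (Fin n), (if (S ∩ T).Nonempty then (1 : ℚ) else 0) *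
      (if Uᶜ ⊆ T then (-1 : ℚ) ^ ((T ∩ U).card + 1) else 0))
      = ∑ B ∈ U.powerset,
        (if (S ∩ (Uᶜ ∪ B)).Nonempty then (1 : ℚ) else 0) * (-1 : ℚ) ^ (B.card + 1) := by
    rw [← Finset.sum_filter_add_sum_filter_not Finset.univ (fun T => Uᶜ ⊆ T)]
    have h2 : ∑ T ∈ Finset.univ.filter (fun T => ¬ Uᶜ ⊆ T),
        (if (S ∩ T).Nonempty then (1 : ℚ) else 0) *
        (if Uᶜ ⊆ T then (-1 : ℚ) ^ ((T ∩ U).card + 1) else 0) = 0 := by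
      apply Finset.sum_eq_zero
      intro T hT
      simp only [Finset.mem_filter] at hT
      rw [if_neg hT.2, mul_zero]
    rw [h2, add_zero]
    apply Finset.sum_nbij' (i := fun T => T ∩ U) (j := fun B => Uᶜ ∪ B)
    · intro T hT
      simp [Finset.mem_powerset]
    · intro B hB
      simp only [Finset.mem_powerset] at hB
      simp only [Finset.mem_filter, Finset.mem_univ, true_and]
      exact Finset.subset_union_left
    · intro T hT
      simp only [Finset.mem_filter, Finset.mem_univ, true_and] at hT
      ext x
      simp only [Finset.mem_union, Finset.mem_compl, Finset.mem_inter]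
      constructor
      · rintro (h | ⟨h, -⟩)
        · exact hT (Finset.mem_compl.mpr h)
        · exact h
      · intro h
        exact Or.elim (em (x ∈ U)) (fun hx => Or.inr ⟨h, hx⟩) Or.inl
    · intro B hB
      simp only [Finset.mem_powerset] at hB
      ext x
      simp only [Finset.mem_inter, Finset.mem_union, Finset.mem_compl]
      constructor
      · rintro ⟨h | h, hu⟩
        · exact absurd hu h
        · exact h
      · intro h
        exact ⟨Or.inr h, hB h⟩
    · intro T hT
      simp only [Finset.mem_filter, Finset.mem_univ, true_and] at hT
      rw [if_pos hT]
      have : Uᶜ ∪ T ∩ U = T := by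
        ext x
        simp only [Finset.mem_union, Finset.mem_compl, Finset.mem_inter]
        constructor
        · rintro (h | ⟨h, -⟩)
          · exact hT (Finset.mem_compl.mpr h)
          · exact h
        · intro h; exact Or.elim (em (x ∈ U)) (fun hx => Or.inr ⟨h, hx⟩) Or.inl
      rw [this]
  rw [h1]
  by_cases hSU : (S ∩ Uᶜ).Nonempty
  · -- then every indicator is 1, and S ≠ U
    have hne : S ≠ U := by
      rintro rfl
      rw [Finset.inter_compl] at hSU
      exact Finset.not_nonempty_empty hSU
    rw [if_neg hne]
    have : ∀ B ∈ U.powerset,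
        (if (S ∩ (Uᶜ ∪ B)).Nonempty then (1 : ℚ) else 0) * (-1 : ℚ) ^ (B.card + 1)
        = -(-1 : ℚ) ^ B.card := by
      intro B _
      have : (S ∩ (Uᶜ ∪ B)).Nonempty := by
        obtain ⟨x, hx⟩ := hSU
        simp only [Finset.mem_inter] at hx
        exact ⟨x, Finset.mem_inter.mpr ⟨hx.1, Finset.mem_union_left _ hx.2⟩⟩
      rw [if_pos this, one_mul, pow_succ]
      ring
    rw [Finset.sum_congr rfl this, Finset.sum_neg_distrib, pow_sum_q,
      if_neg (Finset.nonempty_iff_ne_empty.mp hU), neg_zero]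
  · -- S ⊆ U case
    have hsub : S ⊆ U := by
      intro x hx
      by_contra hxu
      exact hSU ⟨x, Finset.mem_inter.mpr ⟨hx, Finset.mem_compl.mpr hxu⟩⟩
    have hrw : ∀ B ∈ U.powerset,
        (if (S ∩ (Uᶜ ∪ B)).Nonempty then (1 : ℚ) else 0) * (-1 : ℚ) ^ (B.card + 1)
        = -(-1 : ℚ) ^ B.card - (if (S ∩ B) = ∅ then -(-1 : ℚ) ^ B.card else 0) := by
      intro B _
      have hinter : S ∩ (Uᶜ ∪ B) = S ∩ B := by
        rw [Finset.inter_union_distrib_left]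
        have : S ∩ Uᶜ = ∅ := Finset.not_nonempty_iff_eq_empty.mp hSU
        rw [this, Finset.empty_union]
      rw [hinter]
      by_cases h : (S ∩ B).Nonempty
      · rw [if_pos h, if_neg (Finset.nonempty_iff_ne_empty.mp h), one_mul, pow_succ, sub_zero]
        ring
      · rw [if_neg h, if_pos (Finset.not_nonempty_iff_eq_empty.mp h), zero_mul]
        ring
    rw [Finset.sum_congr rfl hrw, Finset.sum_sub_distrib, Finset.sum_neg_distrib, pow_sum_q,
      if_neg (Finset.nonempty_iff_ne_empty.mp hU), neg_zero, zero_sub]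
    have hfil : U.powerset.filter (fun B => S ∩ B = ∅) = (U \ S).powerset := by
      ext B
      simp only [Finset.mem_filter, Finset.mem_powerset, Finset.subset_sdiff]
      rw [← Finset.disjoint_iff_inter_eq_empty, disjoint_comm]
    rw [← Finset.sum_filter, hfil]
    have : ∑ B ∈ (U \ S).powerset, -(-1 : ℚ) ^ B.card
        = -(if U \ S = ∅ then (1:ℚ) else 0) := by
      rw [Finset.sum_neg_distrib, pow_sum_q]
    rw [this, neg_neg]
    have hiff : U \ S = ∅ ↔ S = U := by
      rw [Finset.sdiff_eq_empty_iff_subset]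
      exact ⟨fun h => Finset.Subset.antisymm hsub h, fun h => h ▸ Finset.Subset.refl U⟩
    exact if_congr hiff rfl rfl

/-- Every entry of the inverse of the intersection-incidence matrix lies in
`{-1,0,1}`; in particular `M x = r` has a unique integral solution for every
integral `r`. -/
theorem intersection_matrix_inv_entries (n : ℕ) (hn : 1 ≤ n)
    (M : Matrix {S : Finset (Fin n) // S.Nonempty} {S : Finset (Fin n) // S.Nonempty} ℚ)
    (hM : ∀ S T : {S : Finset (Fin n) // S.Nonempty},
      M S T = if (S.1 ∩ T.1).Nonempty then 1 else 0) :
    (∀ S T : {S : Finset (Fin n) // S.Nonempty},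
      M⁻¹ S T = -1 ∨ M⁻¹ S T = 0 ∨ M⁻¹ S T = 1) ∧
    ∀ r : {S : Finset (Fin n) // S.Nonempty} → ℚ, (∀ T, ∃ z : ℤ, r T = z) →
      ∃! x : {S : Finset (Fin n) // S.Nonempty} → ℚ,
        M.mulVec x = r ∧ ∀ S, ∃ z : ℤ, x S = z := by
  classical
  set N : Matrix {S : Finset (Fin n) // S.Nonempty} {S : Finset (Fin n) // S.Nonempty} ℚ :=
    fun S T => if (S.1)ᶜ ⊆ T.1 then (-1 : ℚ) ^ ((S.1 ∩ T.1).card + 1) else 0 with hN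
  have hMN : M * N = 1 := by
    ext S U
    rw [Matrix.mul_apply, Matrix.one_apply]
    have hterm : ∀ T : {S : Finset (Fin n) // S.Nonempty},
        M S T * N T U = (if (S.1 ∩ T.1).Nonempty then (1:ℚ) else 0) *
          (if (U.1)ᶜ ⊆ T.1 then (-1 : ℚ) ^ ((T.1 ∩ U.1).card + 1) else 0) := by
      intro T
      rw [hM]
      simp only [hN]
      congr 1
      exact if_congr compl_ss_comm rfl rfl
    rw [Finset.sum_congr rfl (fun T _ => hterm T)]
    have hsubty : (∑ T : {S : Finset (Fin n) // S.Nonempty},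
        (if (S.1 ∩ T.1).Nonempty then (1:ℚ) else 0) *
          (if (U.1)ᶜ ⊆ T.1 then (-1 : ℚ) ^ ((T.1 ∩ U.1).card + 1) else 0))
        = ∑ T : Finset (Fin n), (if (S.1 ∩ T).Nonempty then (1:ℚ) else 0) *
          (if (U.1)ᶜ ⊆ T then (-1 : ℚ) ^ ((T ∩ U.1).card + 1) else 0) := by
      rw [← Finset.sum_subtype (p := fun T : Finset (Fin n) => T.Nonempty)
        (Finset.univ.filter (fun T : Finset (Fin n) => T.Nonempty))
        (by intro x; simp)
        (fun T => (if (S.1 ∩ T).Nonempty then (1:ℚ) else 0) *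
          (if (U.1)ᶜ ⊆ T then (-1 : ℚ) ^ ((T ∩ U.1).card + 1) else 0))]
      apply Finset.sum_subset (Finset.filter_subset _ _)
      intro T _ hT
      simp only [Finset.mem_filter, Finset.mem_univ, true_and,
        Finset.not_nonempty_iff_eq_empty] at hT
      subst hT
      rw [Finset.inter_empty, if_neg (by simp), zero_mul]
    rw [hsubty, key_sum n S.1 U.1 S.2 U.2]
    exact if_congr Subtype.ext_iff.symm rfl rfl
  have hNM : N * M = 1 := mul_eq_one_comm.mp hMN
  have hinv : M⁻¹ = N := Matrix.inv_eq_right_inv hMN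
  have hNval : ∀ S T, N S T = -1 ∨ N S T = 0 ∨ N S T = 1 := by
    intro S T
    simp only [hN]
    by_cases h : (S.1)ᶜ ⊆ T.1
    · rw [if_pos h]
      rcases Nat.even_or_odd ((S.1 ∩ T.1).card + 1) with he | ho
      · right; right; exact he.neg_one_pow
      · left; exact ho.neg_one_pow
    · right; left; rw [if_neg h]
  constructor
  · intro S T; rw [hinv]; exact hNval S T
  · intro r hr
    refine ⟨N.mulVec r, ⟨?_, ?_⟩, ?_⟩
    · rw [Matrix.mulVec_mulVec, hMN, Matrix.one_mulVec]
    · intro S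
      choose z hz using hr
      have hw : ∀ T, ∃ w : ℤ, N S T = w := by
        intro T
        rcases hNval S T with h | h | h
        · exact ⟨-1, by rw [h]; norm_num⟩
        · exact ⟨0, by rw [h]; norm_num⟩
        · exact ⟨1, by rw [h]; norm_num⟩
      choose w hw using hw
      refine ⟨∑ T, w T * z T, ?_⟩
      rw [Matrix.mulVec, dotProduct]
      push_cast
      exact Finset.sum_congr rfl (fun T _ => by rw [hw T, hz T])
    · rintro y ⟨hy, -⟩
      have : N.mulVec (M.mulVec y) = y := by
        rw [Matrix.mulVec_mulVec, hNM, Matrix.one_mulVec]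
      rw [← this, hy]
end

section
/- Let $M_n$ be the intersection-incidence matrix on nonempty subsets of $\{1,\dots,n\}$ and $e_n$ the all-ones vector of dimension $2^n-1$. Then $e_n^{t} M_n^{-1} e_n = 1$. -/
open Finset

/-- `eᵗ Mₙ⁻¹ e = 1` for the intersection-incidence matrix `Mₙ`. -/
theorem intersection_matrix_inv_sum (n : ℕ) (hn : 1 ≤ n)
    (M : Matrix {S : Finset (Fin n) // S.Nonempty} {S : Finset (Fin n) // S.Nonempty} ℚ)
    (hM : ∀ S T : {S : Finset (Fin n) // S.Nonempty},
      M S T = if (S.1 ∩ T.1).Nonempty then 1 else 0)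
    (hinv : IsUnit M) :
    ∑ S : {S : Finset (Fin n) // S.Nonempty}, ∑ T : {S : Finset (Fin n) // S.Nonempty},
      M⁻¹ S T = 1 := by
  have hF : (Finset.univ : Finset (Fin n)).Nonempty := by
    have : Nonempty (Fin n) := Fin.pos_iff_nonempty.mp (by omega)
    exact Finset.univ_nonempty
  set F : {S : Finset (Fin n) // S.Nonempty} := ⟨Finset.univ, hF⟩ with hFdef
  have hcol : ∀ T : {S : Finset (Fin n) // S.Nonempty}, M T F = 1 := by
    intro T
    rw [hM]
    simp [hFdef, T.2]
  have h1 : M⁻¹ * M = 1 :=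
    Matrix.nonsing_inv_mul M ((Matrix.isUnit_iff_isUnit_det M).mp hinv)
  have hrow : ∀ S, ∑ T : {S : Finset (Fin n) // S.Nonempty}, M⁻¹ S T
      = (1 : Matrix _ _ ℚ) S F := by
    intro S
    rw [← h1]
    rw [Matrix.mul_apply]
    congr 1
    ext T
    rw [hcol, mul_one]
  calc ∑ S, ∑ T, M⁻¹ S T = ∑ S, (1 : Matrix _ _ ℚ) S F := by
        exact Finset.sum_congr rfl fun S _ => hrow S
    _ = 1 := by
        simp [Matrix.one_apply]
end

section
/- Let $r=(r_T)_{\emptyset\neq T\subseteq\{1,\dots,n\}}$ be a rational vector (with the convention $r_\emptyset=0$). Define $x_S = \sum_{\{1,\dots,n\}\setminus S \subseteq T \subseteq \{1,\dots,n\}} (-1)^{|T|+|S|+n+1} r_T$ for each nonempty $S\subseteq\{1,\dots,n\}$. Then for every nonempty $U\subseteq\{1,\dots,n\}$, $\sum_{\emptyset\neq S\subseteq\{1,\dots,n\},\ U\cap S\neq\emptyset} x_S = r_U$, i.e. $x$ solves $Mx=r$ where $M$ is the intersection-incidence matrix. -/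
open Finset

lemma powerset_alt_sum {α : Type*} [DecidableEq α] (s : Finset α) :
    (∑ B ∈ s.powerset, (-1 : ℚ) ^ B.card) = if s = ∅ then 1 else 0 := by
  have h := congrArg (fun z : ℤ => (z : ℚ)) (@Finset.sum_powerset_neg_one_pow_card α _ s)
  push_cast [apply_ite (fun z : ℤ => (z : ℚ))] at h
  exact h

lemma interval_alt_sum {α : Type*} [DecidableEq α] (A V : Finset α) (hAV : A ⊆ V) :
    ∑ S ∈ V.powerset.filter (fun S => A ⊆ S), (-1 : ℚ) ^ S.card
      = if A = V then (-1 : ℚ) ^ V.card else 0 := by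
  have hb : ∑ S ∈ V.powerset.filter (fun S => A ⊆ S), (-1 : ℚ) ^ S.card
      = ∑ B ∈ (V \ A).powerset, (-1 : ℚ) ^ (B.card + A.card) := by
    refine Finset.sum_nbij' (fun S => S \ A) (fun B => B ∪ A) ?_ ?_ ?_ ?_ ?_
    · intro S hS
      simp only [mem_filter, mem_powerset] at hS ⊢
      exact sdiff_subset_sdiff hS.1 Subset.rfl
    · intro B hB
      simp only [mem_powerset, mem_filter] at hB ⊢
      constructor
      · exact union_subset (hB.trans (sdiff_subset)) hAV
      · exact subset_union_right
    · intro S hS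
      simp only [mem_filter, mem_powerset] at hS
      exact sdiff_union_of_subset hS.2
    · intro B hB
      simp only [mem_powerset] at hB
      have hd : Disjoint B A := disjoint_of_subset_left hB sdiff_disjoint
      show (B ∪ A) \ A = B
      rw [union_sdiff_right, sdiff_eq_self_of_disjoint hd]
    · intro S hS
      simp only [mem_filter, mem_powerset] at hS
      rw [card_sdiff_of_subset hS.2, Nat.sub_add_cancel (card_le_card hS.2)]
  rw [hb]
  have : ∑ B ∈ (V \ A).powerset, (-1 : ℚ) ^ (B.card + A.card)
      = (∑ B ∈ (V \ A).powerset, (-1 : ℚ) ^ B.card) * (-1 : ℚ) ^ A.card := by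
    rw [sum_mul]
    exact Finset.sum_congr rfl fun B _ => (pow_add _ _ _)
  rw [this, powerset_alt_sum]
  have hiff : V \ A = ∅ ↔ A = V := by
    rw [sdiff_eq_empty_iff_subset]
    exact ⟨fun h => Subset.antisymm hAV h, fun h => h ▸ Subset.rfl⟩
  by_cases hc : A = V
  · rw [if_pos (hiff.mpr hc), if_pos hc, one_mul, hc]
  · rw [if_neg (fun h => hc (hiff.mp h)), if_neg hc, zero_mul]

/-- The explicit vector `x_S = ∑_{{1,…,n}∖S ⊆ T} (-1)^{|T|+|S|+n+1} r_T` solves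
`M x = r` for the intersection-incidence matrix `M`. -/
theorem explicit_solution (n : ℕ) (hn : 1 ≤ n)
    (r : Finset (Fin n) → ℚ) (hr : r ∅ = 0)
    (x : Finset (Fin n) → ℚ)
    (hx : ∀ S : Finset (Fin n),
      x S = ∑ T ∈ univ.filter (fun T : Finset (Fin n) => univ \ S ⊆ T),
        (-1 : ℚ) ^ (T.card + S.card + n + 1) * r T) :
    ∀ U : Finset (Fin n), U.Nonempty →
      ∑ S ∈ univ.filter (fun S : Finset (Fin n) => S.Nonempty ∧ (U ∩ S).Nonempty),
        x S = r U := by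
  -- Key lemma: the sum of x over the powerset of V equals -r (univ \ V).
  have key : ∀ V : Finset (Fin n), ∑ S ∈ V.powerset, x S = - r (univ \ V) := by
    intro V
    calc ∑ S ∈ V.powerset, x S
        = ∑ S ∈ V.powerset, ∑ T ∈ (univ : Finset (Finset (Fin n))),
            (if univ \ S ⊆ T then (-1 : ℚ) ^ (T.card + S.card + n + 1) * r T else 0) := by
          refine Finset.sum_congr rfl fun S _ => ?_
          rw [hx S, Finset.sum_filter]
      _ = ∑ T ∈ (univ : Finset (Finset (Fin n))), ∑ S ∈ V.powerset,
            (if univ \ S ⊆ T then (-1 : ℚ) ^ (T.card + S.card + n + 1) * r T else 0) :=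
          Finset.sum_comm
      _ = ∑ T ∈ (univ : Finset (Finset (Fin n))),
            (if T = univ \ V then (-1 : ℚ) ^ (T.card + n + 1 + V.card) * r T else 0) := by
          refine Finset.sum_congr rfl fun T _ => ?_
          have hcond : ∀ S : Finset (Fin n), (univ \ S ⊆ T) ↔ (univ \ T ⊆ S) := by
            intro S
            constructor <;> intro h a ha <;>
              · simp only [mem_sdiff, mem_univ, true_and] at ha
                by_contra hb
                exact ha (h (by simp [mem_sdiff, hb]))
          calc ∑ S ∈ V.powerset,
                (if univ \ S ⊆ T then (-1 : ℚ) ^ (T.card + S.card + n + 1) * r T else 0)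
              = ∑ S ∈ V.powerset.filter (fun S => univ \ T ⊆ S),
                (-1 : ℚ) ^ (T.card + S.card + n + 1) * r T := by
                rw [Finset.sum_filter]
                refine Finset.sum_congr rfl fun S _ => ?_
                rw [if_congr (hcond S) rfl rfl]
            _ = ((-1 : ℚ) ^ (T.card + n + 1) * r T) *
                ∑ S ∈ V.powerset.filter (fun S => univ \ T ⊆ S), (-1 : ℚ) ^ S.card := by
                rw [Finset.mul_sum]
                refine Finset.sum_congr rfl fun S _ => ?_
                rw [show T.card + S.card + n + 1 = S.card + (T.card + n + 1) by ring,
                  pow_add]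
                ring
            _ = (if T = univ \ V then (-1 : ℚ) ^ (T.card + n + 1 + V.card) * r T else 0) := by
                by_cases hsub : univ \ T ⊆ V
                · rw [interval_alt_sum _ _ hsub]
                  have hiff : univ \ T = V ↔ T = univ \ V := by
                    constructor
                    · intro h; rw [← h, sdiff_sdiff_right_self, inf_eq_inter,
                        univ_inter]
                    · intro h; rw [h, sdiff_sdiff_right_self, inf_eq_inter, univ_inter]
                  by_cases hc : T = univ \ V
                  · rw [if_pos (hiff.mpr hc), if_pos hc, pow_add]; ring
                  · rw [if_neg (fun h => hc (hiff.mp h)), if_neg hc, mul_zero]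
                · have hfe : V.powerset.filter (fun S => univ \ T ⊆ S) = ∅ := by
                    refine Finset.filter_false_of_mem fun S hS h => ?_
                    exact hsub (h.trans (mem_powerset.mp hS))
                  have hc : T ≠ univ \ V := by
                    intro h
                    exact hsub (by rw [h, sdiff_sdiff_right_self, inf_eq_inter, univ_inter])
                  rw [hfe, Finset.sum_empty, mul_zero, if_neg hc]
      _ = (-1 : ℚ) ^ ((univ \ V).card + n + 1 + V.card) * r (univ \ V) := by
          rw [Finset.sum_ite_eq' univ (univ \ V)
            (fun T => (-1 : ℚ) ^ (T.card + n + 1 + V.card) * r T)]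
          simp
      _ = - r (univ \ V) := by
          have hcard : (univ \ V).card = n - V.card := by
            rw [card_sdiff_of_subset (subset_univ V), card_univ, Fintype.card_fin]
          have hle : V.card ≤ n := by
            simpa using card_le_card (subset_univ V)
          have hexp : (univ \ V).card + n + 1 + V.card = 2 * n + 1 := by
            rw [hcard]; omega
          rw [hexp]
          have : Odd (2 * n + 1) := ⟨n, by ring⟩
          rw [this.neg_one_pow]; ring
  intro U hU
  have h1 := key univ
  have h2 := key (univ \ U)
  rw [sdiff_self] at h1
  rw [sdiff_sdiff_right_self, inf_eq_inter, univ_inter] at h2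
  have hbot : ((⊥ : Finset (Fin n))) = ∅ := rfl
  rw [hbot, hr, neg_zero] at h1
  -- decompose the full sum
  have hsplit := Finset.sum_filter_add_sum_filter_not (univ : Finset (Finset (Fin n)))
    (fun S => (U ∩ S).Nonempty) x
  have hfilter1 : univ.filter (fun S : Finset (Fin n) => S.Nonempty ∧ (U ∩ S).Nonempty)
      = univ.filter (fun S : Finset (Fin n) => (U ∩ S).Nonempty) := by
    refine Finset.filter_congr fun S _ => ?_
    constructor
    · exact fun h => h.2
    · intro h
      refine ⟨?_, h⟩
      obtain ⟨a, ha⟩ := h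
      exact ⟨a, (mem_inter.mp ha).2⟩
  have hfilter2 : univ.filter (fun S : Finset (Fin n) => ¬ (U ∩ S).Nonempty)
      = (univ \ U).powerset := by
    ext S
    simp only [mem_filter, mem_univ, true_and, mem_powerset, not_nonempty_iff_eq_empty,
      ← disjoint_iff_inter_eq_empty, subset_sdiff, subset_univ, true_and]
    exact disjoint_comm
  have huniv : ∑ S ∈ (univ : Finset (Finset (Fin n))), x S = 0 := by
    rw [← Finset.powerset_univ, h1]
  rw [hfilter1]
  have := hsplit
  rw [hfilter2, h2, huniv] at this
  linarith
end

section
/- Let $r_\emptyset = 0$ and let $r_T$ be given rationals for nonempty $T\subseteq\{1,\dots,n\}$. The unique solution $x$ of $Mx=r$ (with $M$ the intersection-incidence matrix) satisfies $x_S\ge 0$ for all nonempty $S$ if and only if for every proper subset $S\subsetneq\{1,\dots,n\}$ one has $\sum_{S\subseteq T\subseteq\{1,\dots,n\}} (-1)^{|S|+|T|} r_T \le 0$. -/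
open Finset

private lemma sum_neg_one_pow_supersets {n : ℕ} (U S : Finset (Fin n)) (hSU : S ⊆ U) :
    ∑ T ∈ U.powerset.filter (fun T => S ⊆ T), (-1 : ℚ) ^ T.card
      = (-1 : ℚ) ^ S.card * (if S = U then 1 else 0) := by
  classical
  have hb : ∑ T ∈ U.powerset.filter (fun T => S ⊆ T), (-1 : ℚ) ^ T.card
      = ∑ W ∈ (U \ S).powerset, (-1 : ℚ) ^ (W.card + S.card) := by
    refine Finset.sum_nbij' (fun T => T \ S) (fun W => W ∪ S) ?_ ?_ ?_ ?_ ?_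
    · intro T hT
      simp only [mem_filter, mem_powerset] at hT
      exact mem_powerset.2 (sdiff_subset_sdiff hT.1 le_rfl)
    · intro W hW
      simp only [mem_powerset] at hW
      refine mem_filter.2 ⟨mem_powerset.2 (union_subset (hW.trans sdiff_subset) hSU),
        subset_union_right⟩
    · intro T hT
      simp only [mem_filter, mem_powerset] at hT
      exact sdiff_union_of_subset hT.2
    · intro W hW
      simp only [mem_powerset] at hW
      have hdisj : Disjoint W S := Finset.sdiff_disjoint.mono_left hW
      show (W ∪ S) \ S = W
      rw [Finset.union_sdiff_right, Finset.sdiff_eq_self_of_disjoint hdisj]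
    · intro T hT
      simp only [mem_filter, mem_powerset] at hT
      rw [card_sdiff_add_card_eq_card hT.2]
  rw [hb]
  have : ∀ W ∈ (U \ S).powerset, (-1 : ℚ) ^ (W.card + S.card)
      = (-1 : ℚ) ^ S.card * (-1 : ℚ) ^ W.card := by
    intro W _; rw [pow_add]; ring
  rw [Finset.sum_congr rfl this, ← Finset.mul_sum]
  congr 1
  have hz := Finset.sum_powerset_neg_one_pow_card (x := U \ S)
  have : ((∑ m ∈ (U \ S).powerset, (-1 : ℤ) ^ m.card : ℤ) : ℚ)
      = ∑ m ∈ (U \ S).powerset, (-1 : ℚ) ^ m.card := by push_cast; rfl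
  rw [← this, hz]
  have : U \ S = ∅ ↔ S = U := by
    rw [sdiff_eq_empty_iff_subset]
    exact ⟨fun h => le_antisymm hSU h, fun h => h ▸ le_rfl⟩
  by_cases h : S = U <;> simp [h, this]

/-- The unique solution of `M x = r` is nonnegative iff for each proper subset
`S ⊊ {1,…,n}` one has `∑_{S ⊆ T} (-1)^{|S|+|T|} r_T ≤ 0`. -/
theorem solution_nonneg_iff (n : ℕ) (hn : 1 ≤ n)
    (r : Finset (Fin n) → ℚ) (hr : r ∅ = 0)
    (x : Finset (Fin n) → ℚ)
    (hx : ∀ U : Finset (Fin n), U.Nonempty →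
      ∑ S ∈ univ.filter (fun S : Finset (Fin n) => (U ∩ S).Nonempty), x S = r U) :
    (∀ S : Finset (Fin n), S.Nonempty → 0 ≤ x S) ↔
      ∀ S : Finset (Fin n), S ⊂ univ →
        ∑ T ∈ univ.filter (fun T : Finset (Fin n) => S ⊆ T),
          (-1 : ℚ) ^ (S.card + T.card) * r T ≤ 0 := by
  classical
  -- r U = sum for all U (including empty)
  have hx' : ∀ U : Finset (Fin n),
      r U = ∑ A ∈ univ.filter (fun A : Finset (Fin n) => (U ∩ A).Nonempty), x A := by
    intro U
    rcases U.eq_empty_or_nonempty with h | h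
    · subst h
      rw [hr]
      rw [Finset.sum_eq_zero]
      intro A hA
      simp only [mem_filter, empty_inter] at hA
      exact absurd hA.2 (not_nonempty_empty)
    · exact (hx U h).symm
  -- key identity
  have key : ∀ S : Finset (Fin n), S ⊂ univ →
      ∑ T ∈ univ.filter (fun T : Finset (Fin n) => S ⊆ T),
        (-1 : ℚ) ^ (S.card + T.card) * r T = - x Sᶜ := by
    intro S hS
    have step1 : ∑ T ∈ univ.filter (fun T : Finset (Fin n) => S ⊆ T),
        (-1 : ℚ) ^ (S.card + T.card) * r T
        = ∑ T ∈ univ.filter (fun T : Finset (Fin n) => S ⊆ T),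
            ∑ A ∈ (univ : Finset (Finset (Fin n))),
              (if (T ∩ A).Nonempty then (-1 : ℚ) ^ (S.card + T.card) * x A else 0) := by
      refine Finset.sum_congr rfl fun T _ => ?_
      rw [hx' T, Finset.mul_sum, Finset.sum_filter]
    rw [step1, Finset.sum_comm]
    -- inner sum for fixed A
    have inner : ∀ A : Finset (Fin n),
        ∑ T ∈ univ.filter (fun T : Finset (Fin n) => S ⊆ T),
          (if (T ∩ A).Nonempty then (-1 : ℚ) ^ (S.card + T.card) * x A else 0)
        = (if A = Sᶜ then -1 else 0) * x A := by
      intro A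
      have hsplit : ∑ T ∈ univ.filter (fun T : Finset (Fin n) => S ⊆ T),
          (if (T ∩ A).Nonempty then (-1 : ℚ) ^ (S.card + T.card) * x A else 0)
          = (∑ T ∈ univ.filter (fun T : Finset (Fin n) => S ⊆ T),
              (-1 : ℚ) ^ (S.card + T.card)
            - ∑ T ∈ (univ.filter (fun T : Finset (Fin n) => S ⊆ T)).filter
                (fun T => ¬ (T ∩ A).Nonempty), (-1 : ℚ) ^ (S.card + T.card)) * x A := by
        rw [← Finset.sum_filter, ← Finset.sum_mul]
        have hsfn := Finset.sum_filter_add_sum_filter_not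
          (univ.filter (fun T : Finset (Fin n) => S ⊆ T)) (fun T => (T ∩ A).Nonempty)
          (fun T => (-1 : ℚ) ^ (S.card + T.card))
        have : ∑ T ∈ (univ.filter (fun T : Finset (Fin n) => S ⊆ T)).filter
            (fun T => (T ∩ A).Nonempty), (-1 : ℚ) ^ (S.card + T.card)
            = ∑ T ∈ univ.filter (fun T : Finset (Fin n) => S ⊆ T), (-1 : ℚ) ^ (S.card + T.card)
              - ∑ T ∈ (univ.filter (fun T : Finset (Fin n) => S ⊆ T)).filter
                (fun T => ¬ (T ∩ A).Nonempty), (-1 : ℚ) ^ (S.card + T.card) := by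
          linarith
        rw [this]
      rw [hsplit]
      -- first sum is 0 since S ≠ univ
      have hSne : S ≠ univ := hS.ne
      have h1 : ∑ T ∈ univ.filter (fun T : Finset (Fin n) => S ⊆ T),
          (-1 : ℚ) ^ (S.card + T.card) = 0 := by
        have : ∀ T ∈ univ.filter (fun T : Finset (Fin n) => S ⊆ T),
            (-1 : ℚ) ^ (S.card + T.card) = (-1 : ℚ) ^ S.card * (-1 : ℚ) ^ T.card := by
          intro T _; rw [pow_add]
        rw [Finset.sum_congr rfl this, ← Finset.mul_sum]
        have h2 : (univ : Finset (Finset (Fin n))) = (univ : Finset (Fin n)).powerset := by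
          rw [Finset.powerset_univ]
        rw [h2, sum_neg_one_pow_supersets univ S (subset_univ S), if_neg hSne, mul_zero,
          mul_zero]
      rw [h1]
      -- second sum
      have hfe : (univ.filter (fun T : Finset (Fin n) => S ⊆ T)).filter
            (fun T => ¬ (T ∩ A).Nonempty)
          = Aᶜ.powerset.filter (fun T => S ⊆ T) := by
        ext T
        simp only [mem_filter, mem_powerset, mem_univ, true_and, not_nonempty_iff_eq_empty,
          ← Finset.disjoint_iff_inter_eq_empty]
        constructor
        · rintro ⟨h1, h2⟩
          exact ⟨fun a ha => Finset.mem_compl.2 (Finset.disjoint_left.1 h2 ha), h1⟩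
        · rintro ⟨h1, h2⟩
          exact ⟨h2, Finset.disjoint_left.2 fun a ha => Finset.mem_compl.1 (h1 ha)⟩
      rw [hfe]
      by_cases hSA : S ⊆ Aᶜ
      · have : ∀ T ∈ Aᶜ.powerset.filter (fun T => S ⊆ T),
            (-1 : ℚ) ^ (S.card + T.card) = (-1 : ℚ) ^ S.card * (-1 : ℚ) ^ T.card := by
          intro T _; rw [pow_add]
        rw [Finset.sum_congr rfl this, ← Finset.mul_sum,
          sum_neg_one_pow_supersets Aᶜ S hSA]
        have hiff : S = Aᶜ ↔ A = Sᶜ := by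
          constructor
          · intro h; rw [h, compl_compl]
          · intro h; rw [h, compl_compl]
        by_cases h : A = Sᶜ
        · rw [if_pos (hiff.2 h), if_pos h, mul_one, ← mul_pow]
          norm_num
        · rw [if_neg (fun hh => h (hiff.1 hh)), if_neg h, mul_zero, mul_zero]
          norm_num
      · have hempty : Aᶜ.powerset.filter (fun T => S ⊆ T) = ∅ := by
          rw [Finset.filter_eq_empty_iff]
          intro T hT
          rw [mem_powerset] at hT
          exact fun hST => hSA (hST.trans hT)
        have hAne : A ≠ Sᶜ := by
          intro h; apply hSA; rw [h, compl_compl]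
        rw [hempty, Finset.sum_empty, if_neg hAne]
        ring
    rw [Finset.sum_congr rfl (fun A _ => inner A)]
    have hite : ∀ A : Finset (Fin n),
        (if A = Sᶜ then (-1 : ℚ) else 0) * x A = if A = Sᶜ then -1 * x A else 0 := by
      intro A; split <;> simp
    rw [Finset.sum_congr rfl (fun A _ => hite A),
      Finset.sum_ite_eq' univ Sᶜ (fun A => -1 * x A)]
    simp
  -- conclude
  constructor
  · intro hpos S hS
    rw [key S hS]
    obtain ⟨a, _, haS⟩ := Finset.exists_of_ssubset hS
    have : Sᶜ.Nonempty := ⟨a, Finset.mem_compl.2 haS⟩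
    linarith [hpos Sᶜ this]
  · intro hneg S hS
    have hScompl : Sᶜ ⊂ univ := by
      rcases hS with ⟨a, ha⟩
      refine Finset.ssubset_univ_iff.2 ?_
      intro h
      have : a ∈ Sᶜ := h ▸ mem_univ a
      rw [Finset.mem_compl] at this
      exact this ha
    have := hneg Sᶜ hScompl
    rw [key Sᶜ hScompl, compl_compl] at this
    linarith
end

section
/- Let $n\ge 1$, and for each nonempty $T\subseteq\{1,\dots,n\}$ let $\delta_T\ge 1$ be integers. Define $h_T = \sum_{\emptyset\neq T'\subseteq\{1,\dots,n\}} \delta_{T'} 2^{|T'|-1} - \sum_{T\subsetneq T'\subseteq\{1,\dots,n\}} \delta_{T'} 2^{|T'|-1-|T|}$ and $l_T = h_T - \delta_T$. Then for every proper subset $S\subsetneq\{1,\dots,n\}$, $\sum_{S\subseteq T\subseteq\{1,\dots,n\},\ T\neq\emptyset,\ |T|\equiv|S|\bmod 2} h_T = \sum_{S\subseteq T\subseteq\{1,\dots,n\},\ T\neq\emptyset,\ |T|\not\equiv|S|\bmod 2} l_T$, where the sums range over nonempty $T$ (so that, when $S=\emptyset$, the term $T=\emptyset$ contributes $0$). 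-/
open Finset

lemma droste_binom_sub (n : ℕ) (D : Finset (Fin n)) :
    ∑ U ∈ D.powerset, (-1:ℤ)^U.card * 2^(D.card - U.card) = 1 := by
  induction D using Finset.induction_on with
  | empty => simp
  | insert a D ha ih =>
    rw [Finset.powerset_insert, Finset.sum_union, Finset.sum_image, ← Finset.sum_add_distrib]
    · refine (Finset.sum_congr rfl fun U hU => ?_).trans ih
      have hUD : U ⊆ D := Finset.mem_powerset.mp hU
      have haU : a ∉ U := fun h => ha (hUD h)
      have hc : U.card ≤ D.card := Finset.card_le_card hUD
      rw [Finset.card_insert_of_notMem ha, Finset.card_insert_of_notMem haU]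
      have e1 : D.card + 1 - U.card = (D.card - U.card) + 1 := by omega
      have e2 : D.card + 1 - (U.card + 1) = D.card - U.card := by omega
      rw [e1, e2, pow_succ, pow_succ]
      ring
    · intro x hx y hy hxy
      have hax : a ∉ x := fun h => ha (Finset.mem_powerset.mp hx h)
      have hay : a ∉ y := fun h => ha (Finset.mem_powerset.mp hy h)
      rw [← Finset.erase_insert hax, ← Finset.erase_insert hay, hxy]
    · rw [Finset.disjoint_left]
      intro U hU hU'
      obtain ⟨V, hV, rfl⟩ := Finset.mem_image.mp hU'
      exact ha (Finset.mem_powerset.mp hU (Finset.mem_insert_self a V))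

lemma droste_binom_proper (n : ℕ) (D : Finset (Fin n)) :
    ∑ U ∈ D.powerset \ {D}, (-1:ℤ)^U.card * 2^(D.card - 1 - U.card) =
      if D.card % 2 = 1 then 1 else 0 := by
  have key : (2:ℤ) * ∑ U ∈ D.powerset \ {D}, (-1:ℤ)^U.card * 2^(D.card - 1 - U.card)
      = 1 - (-1:ℤ)^D.card := by
    rw [Finset.mul_sum]
    have h1 : ∑ U ∈ D.powerset \ {D}, (2:ℤ) * ((-1:ℤ)^U.card * 2^(D.card - 1 - U.card))
        = ∑ U ∈ D.powerset \ {D}, (-1:ℤ)^U.card * 2^(D.card - U.card) := by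
      refine Finset.sum_congr rfl fun U hU => ?_
      have hU1 : U ⊆ D := Finset.mem_powerset.mp (Finset.mem_sdiff.mp hU).1
      have hU2 : U ≠ D := by simpa using (Finset.mem_sdiff.mp hU).2
      have hlt : U.card < D.card := Finset.card_lt_card (lt_of_le_of_ne hU1 hU2)
      have : D.card - U.card = (D.card - 1 - U.card) + 1 := by omega
      rw [this, pow_succ]; ring
    rw [h1]
    have h2 : ∑ U ∈ D.powerset \ {D}, (-1:ℤ)^U.card * 2^(D.card - U.card)
        = (∑ U ∈ D.powerset, (-1:ℤ)^U.card * 2^(D.card - U.card)) - (-1:ℤ)^D.card := by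
      rw [Finset.sum_sdiff_eq_sub (by simp)]
      simp
    rw [h2, droste_binom_sub]
  rcases Nat.even_or_odd D.card with he | ho
  · have : (-1:ℤ)^D.card = 1 := he.neg_one_pow
    rw [this] at key
    have h0 : D.card % 2 = 0 := Nat.even_iff.mp he
    rw [if_neg (by omega)]; linarith
  · have : (-1:ℤ)^D.card = -1 := ho.neg_one_pow
    rw [this] at key
    have h0 : D.card % 2 = 1 := Nat.odd_iff.mp ho
    rw [if_pos h0]; linarith



lemma droste_inner_sum (n : ℕ) (S T' : Finset (Fin n)) (hST : S ⊆ T') :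
    ∑ T ∈ univ.filter (fun T : Finset (Fin n) => S ⊆ T ∧ T ⊂ T'),
        (-1:ℤ)^T.card * 2^(T'.card - 1 - T.card)
      = (-1:ℤ)^S.card * (if (T'.card - S.card) % 2 = 1 then 1 else 0) := by
  set D := T' \ S with hD
  have hcD : D.card = T'.card - S.card := Finset.card_sdiff_of_subset hST
  have key : ∑ T ∈ univ.filter (fun T : Finset (Fin n) => S ⊆ T ∧ T ⊂ T'),
        (-1:ℤ)^T.card * 2^(T'.card - 1 - T.card)
      = ∑ U ∈ D.powerset \ {D}, (-1:ℤ)^(S.card + U.card) * 2^(D.card - 1 - U.card) := by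
    refine Finset.sum_nbij' (fun T => T \ S) (fun U => S ∪ U) ?_ ?_ ?_ ?_ ?_
    · intro T hT
      simp only [Finset.mem_filter, Finset.mem_univ, true_and] at hT
      obtain ⟨hS, hTT'⟩ := hT
      rw [Finset.mem_sdiff, Finset.mem_powerset, Finset.mem_singleton]
      constructor
      · exact Finset.sdiff_subset_sdiff hTT'.subset (le_refl S)
      · intro hEq
        have : T = T' := by
          have h1 : T = S ∪ (T \ S) := by rw [Finset.union_sdiff_of_subset hS]
          have h2 : T' = S ∪ (T' \ S) := by rw [Finset.union_sdiff_of_subset hST]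
          rw [h1, hEq, hD, ← h2]
        exact hTT'.ne this
    · intro U hU
      rw [Finset.mem_sdiff, Finset.mem_powerset, Finset.mem_singleton] at hU
      obtain ⟨hUD, hUne⟩ := hU
      simp only [Finset.mem_filter, Finset.mem_univ, true_and]
      refine ⟨Finset.subset_union_left, ?_⟩
      constructor
      · intro x hx
        rcases Finset.mem_union.mp hx with h | h
        · exact hST h
        · exact (Finset.mem_sdiff.mp (hUD h)).1
      · intro hsub
        apply hUne
        apply Finset.Subset.antisymm hUD
        intro x hx
        have hx' := Finset.mem_sdiff.mp hx
        rcases Finset.mem_union.mp (hsub hx'.1) with h | h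
        · exact absurd h hx'.2
        · exact h
    · intro T hT
      simp only [Finset.mem_filter, Finset.mem_univ, true_and] at hT
      rw [Finset.union_sdiff_of_subset hT.1]
    · intro U hU
      rw [Finset.mem_sdiff, Finset.mem_powerset] at hU
      have : Disjoint S U := by
        rw [Finset.disjoint_left]
        intro x hxS hxU
        exact (Finset.mem_sdiff.mp (hU.1 hxU)).2 hxS
      rw [Finset.union_sdiff_cancel_left this]
    · intro T hT
      simp only [Finset.mem_filter, Finset.mem_univ, true_and] at hT
      obtain ⟨hS, hTT'⟩ := hT
      have hdisj : Disjoint S (T \ S) := Finset.disjoint_sdiff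
      have hcard : T.card = S.card + (T \ S).card := by
        rw [← Finset.card_union_of_disjoint hdisj, Finset.union_sdiff_of_subset hS]
      have hcT : T.card < T'.card := Finset.card_lt_card hTT'
      have hcS : S.card ≤ T.card := Finset.card_le_card hS
      rw [hcard]
      have hexp : T'.card - 1 - (S.card + (T \ S).card) = D.card - 1 - (T \ S).card := by
        rw [hcD]; omega
      rw [hexp]
  rw [key]
  have : ∑ U ∈ D.powerset \ {D}, (-1:ℤ)^(S.card + U.card) * 2^(D.card - 1 - U.card)
      = (-1:ℤ)^S.card * ∑ U ∈ D.powerset \ {D}, (-1:ℤ)^U.card * 2^(D.card - 1 - U.card) := by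
    rw [Finset.mul_sum]
    refine Finset.sum_congr rfl fun U hU => ?_
    rw [pow_add]; ring
  rw [this, droste_binom_proper, hcD]


lemma droste_swap_sum (n : ℕ) (δ : Finset (Fin n) → ℤ) (S : Finset (Fin n)) :
    ∑ T ∈ univ.filter (fun T : Finset (Fin n) => S ⊆ T),
        (-1:ℤ)^T.card * (∑ T' ∈ univ.filter (fun T' : Finset (Fin n) => T ⊂ T'),
          δ T' * 2^(T'.card - 1 - T.card))
      = (-1:ℤ)^S.card *
        ∑ T' ∈ univ.filter (fun T' : Finset (Fin n) =>
          S ⊆ T' ∧ (T'.card - S.card) % 2 = 1), δ T' := by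
  have step1 : ∑ T ∈ univ.filter (fun T : Finset (Fin n) => S ⊆ T),
        (-1:ℤ)^T.card * (∑ T' ∈ univ.filter (fun T' : Finset (Fin n) => T ⊂ T'),
          δ T' * 2^(T'.card - 1 - T.card))
      = ∑ T : Finset (Fin n), ∑ T' : Finset (Fin n),
          (if S ⊆ T ∧ T ⊂ T' then δ T' * ((-1:ℤ)^T.card * 2^(T'.card - 1 - T.card)) else 0) := by
    rw [Finset.sum_filter]
    refine Finset.sum_congr rfl fun T _ => ?_
    by_cases hS : S ⊆ T
    · rw [if_pos hS, Finset.mul_sum, Finset.sum_filter]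
      refine Finset.sum_congr rfl fun T' _ => ?_
      by_cases hT : T ⊂ T'
      · rw [if_pos hT, if_pos ⟨hS, hT⟩]; ring
      · rw [if_neg hT, if_neg (fun h => hT h.2)]
    · rw [if_neg hS, Finset.sum_eq_zero]
      intro T' _
      rw [if_neg (fun h => hS h.1)]
  rw [step1, Finset.sum_comm]
  have step2 : ∀ T' : Finset (Fin n),
      ∑ T : Finset (Fin n),
        (if S ⊆ T ∧ T ⊂ T' then δ T' * ((-1:ℤ)^T.card * 2^(T'.card - 1 - T.card)) else 0)
      = (if S ⊆ T' ∧ (T'.card - S.card) % 2 = 1 then (-1:ℤ)^S.card * δ T' else 0) := by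
    intro T'
    rw [← Finset.sum_filter, ← Finset.mul_sum]
    by_cases hST : S ⊆ T'
    · rw [droste_inner_sum n S T' hST]
      by_cases hpar : (T'.card - S.card) % 2 = 1
      · rw [if_pos hpar, if_pos ⟨hST, hpar⟩]; ring
      · rw [if_neg hpar, if_neg (fun h => hpar h.2)]; ring
    · rw [if_neg (fun h => hST h.1)]
      have : univ.filter (fun T : Finset (Fin n) => S ⊆ T ∧ T ⊂ T') = ∅ := by
        rw [Finset.filter_eq_empty_iff]
        intro T _ hT
        exact hST (hT.1.trans hT.2.subset)
      rw [this, Finset.sum_empty, mul_zero]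
  rw [Finset.sum_congr rfl (fun T' _ => step2 T')]
  rw [← Finset.sum_filter, Finset.mul_sum]

lemma droste_flip (n : ℕ) (S : Finset (Fin n)) (x : Fin n) (hx : x ∉ S) :
    (univ.filter (fun T : Finset (Fin n) => S ⊆ T ∧ T.card % 2 = S.card % 2)).card
    = (univ.filter (fun T : Finset (Fin n) => S ⊆ T ∧ T.card % 2 ≠ S.card % 2)).card := by
  apply Finset.card_nbij'
    (i := fun T => if x ∈ T then T.erase x else insert x T)
    (j := fun T => if x ∈ T then T.erase x else insert x T)
  · intro T hT
    simp only [Finset.mem_coe, Finset.mem_filter, Finset.mem_univ, true_and] at hT ⊢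
    obtain ⟨hST, hpar⟩ := hT
    by_cases hxT : x ∈ T
    · rw [if_pos hxT]
      have hc : (T.erase x).card = T.card - 1 := Finset.card_erase_of_mem hxT
      have hc1 : 1 ≤ T.card := Finset.card_pos.mpr ⟨x, hxT⟩
      refine ⟨fun y hy => Finset.mem_erase.mpr ⟨fun h => hx (h ▸ hy), hST hy⟩, ?_⟩
      rw [hc]; omega
    · rw [if_neg hxT]
      have hc : (insert x T).card = T.card + 1 := Finset.card_insert_of_notMem hxT
      refine ⟨hST.trans (Finset.subset_insert x T), ?_⟩
      rw [hc]; omega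
  · intro T hT
    simp only [Finset.mem_coe, Finset.mem_filter, Finset.mem_univ, true_and] at hT ⊢
    obtain ⟨hST, hpar⟩ := hT
    by_cases hxT : x ∈ T
    · rw [if_pos hxT]
      have hc : (T.erase x).card = T.card - 1 := Finset.card_erase_of_mem hxT
      have hc1 : 1 ≤ T.card := Finset.card_pos.mpr ⟨x, hxT⟩
      refine ⟨fun y hy => Finset.mem_erase.mpr ⟨fun h => hx (h ▸ hy), hST hy⟩, ?_⟩
      rw [hc]; omega
    · rw [if_neg hxT]
      have hc : (insert x T).card = T.card + 1 := Finset.card_insert_of_notMem hxT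
      refine ⟨hST.trans (Finset.subset_insert x T), ?_⟩
      rw [hc]; omega
  · intro T _
    dsimp only
    by_cases hxT : x ∈ T
    · rw [if_pos hxT, if_neg (Finset.notMem_erase x T), Finset.insert_erase hxT]
    · rw [if_neg hxT, if_pos (Finset.mem_insert_self x T), Finset.erase_insert hxT]
  · intro T _
    dsimp only
    by_cases hxT : x ∈ T
    · rw [if_pos hxT, if_neg (Finset.notMem_erase x T), Finset.insert_erase hxT]
    · rw [if_neg hxT, if_pos (Finset.mem_insert_self x T), Finset.erase_insert hxT]

lemma droste_nonempty_of (n : ℕ) (S T : Finset (Fin n)) (hST : S ⊆ T)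
    (hpar : T.card % 2 ≠ S.card % 2) : T.Nonempty := by
  have hle : S.card ≤ T.card := Finset.card_le_card hST
  exact Finset.card_pos.mp (by omega)

lemma droste_card_eq (n : ℕ) (S : Finset (Fin n)) (hSu : S ⊂ univ) :
    ((univ.filter (fun T : Finset (Fin n) =>
        T.Nonempty ∧ S ⊆ T ∧ T.card % 2 = S.card % 2)).card : ℤ)
      + (if S = ∅ then 1 else 0)
    = ((univ.filter (fun T : Finset (Fin n) =>
        T.Nonempty ∧ S ⊆ T ∧ T.card % 2 ≠ S.card % 2)).card : ℤ) := by
  obtain ⟨x, -, hx⟩ := Finset.exists_of_ssubset hSu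
  have hflip := droste_flip n S x hx
  have hdiff : univ.filter (fun T : Finset (Fin n) => T.Nonempty ∧ S ⊆ T ∧ T.card % 2 ≠ S.card % 2)
      = univ.filter (fun T : Finset (Fin n) => S ⊆ T ∧ T.card % 2 ≠ S.card % 2) := by
    apply Finset.filter_congr
    intro T _
    constructor
    · rintro ⟨-, h2, h3⟩; exact ⟨h2, h3⟩
    · rintro ⟨h2, h3⟩; exact ⟨droste_nonempty_of n S T h2 h3, h2, h3⟩
  rcases Finset.eq_empty_or_nonempty S with hSe | hSne
  · subst hSe
    rw [if_pos rfl]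
    have hsame : univ.filter (fun T : Finset (Fin n) => (∅:Finset (Fin n)) ⊆ T ∧ T.card % 2 = (∅:Finset (Fin n)).card % 2)
        = insert (∅ : Finset (Fin n)) (univ.filter (fun T : Finset (Fin n) =>
            T.Nonempty ∧ (∅:Finset (Fin n)) ⊆ T ∧ T.card % 2 = (∅:Finset (Fin n)).card % 2)) := by
      ext T
      simp only [Finset.mem_filter, Finset.mem_univ, true_and, Finset.mem_insert,
        Finset.empty_subset, true_and, Finset.card_empty]
      rcases Finset.eq_empty_or_nonempty T with hT | hT
      · subst hT; simp
      · simp [hT, Finset.nonempty_iff_ne_empty.mp hT]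
    have hnm : (∅ : Finset (Fin n)) ∉ univ.filter (fun T : Finset (Fin n) =>
        T.Nonempty ∧ (∅:Finset (Fin n)) ⊆ T ∧ T.card % 2 = (∅:Finset (Fin n)).card % 2) := by
      simp
    rw [hsame, Finset.card_insert_of_notMem hnm] at hflip
    rw [hdiff, ← hflip]
    push_cast
    ring
  · rw [if_neg (Finset.nonempty_iff_ne_empty.mp hSne)]
    have hsame : univ.filter (fun T : Finset (Fin n) => T.Nonempty ∧ S ⊆ T ∧ T.card % 2 = S.card % 2)
        = univ.filter (fun T : Finset (Fin n) => S ⊆ T ∧ T.card % 2 = S.card % 2) := by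
      apply Finset.filter_congr
      intro T _
      constructor
      · rintro ⟨-, h2, h3⟩; exact ⟨h2, h3⟩
      · rintro ⟨h2, h3⟩; exact ⟨hSne.mono h2, h2, h3⟩
    rw [hsame, hdiff, hflip]
    ring

lemma droste_pow_congr {a b : ℕ} (h : a % 2 = b % 2) : (-1:ℤ)^a = (-1)^b := by
  rcases Nat.even_or_odd a with ha | ha
  · have ha' := Nat.even_iff.mp ha
    have hb : Even b := Nat.even_iff.mpr (by omega)
    rw [ha.neg_one_pow, hb.neg_one_pow]
  · have ha' := Nat.odd_iff.mp ha
    have hb : Odd b := Nat.odd_iff.mpr (by omega)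
    rw [ha.neg_one_pow, hb.neg_one_pow]

lemma droste_pow_ne {a b : ℕ} (h : a % 2 ≠ b % 2) : (-1:ℤ)^a = -(-1)^b := by
  rcases Nat.even_or_odd a with ha | ha
  · have ha' := Nat.even_iff.mp ha
    have hb : Odd b := Nat.odd_iff.mpr (by omega)
    rw [ha.neg_one_pow, hb.neg_one_pow]; ring
  · have ha' := Nat.odd_iff.mp ha
    have hb : Even b := Nat.even_iff.mpr (by omega)
    rw [ha.neg_one_pow, hb.neg_one_pow]

lemma droste_star (n : ℕ) (δ : Finset (Fin n) → ℤ) (S : Finset (Fin n)) :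
    (∑ T ∈ univ.filter (fun T : Finset (Fin n) =>
        T.Nonempty ∧ S ⊆ T ∧ T.card % 2 = S.card % 2),
        ∑ T' ∈ univ.filter (fun T' : Finset (Fin n) => T ⊂ T'),
          δ T' * 2^(T'.card - 1 - T.card))
    - (∑ T ∈ univ.filter (fun T : Finset (Fin n) =>
        T.Nonempty ∧ S ⊆ T ∧ T.card % 2 ≠ S.card % 2),
        ∑ T' ∈ univ.filter (fun T' : Finset (Fin n) => T ⊂ T'),
          δ T' * 2^(T'.card - 1 - T.card))
    = (∑ T ∈ univ.filter (fun T : Finset (Fin n) =>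
        T.Nonempty ∧ S ⊆ T ∧ T.card % 2 ≠ S.card % 2), δ T)
      - (if S = ∅ then
          ∑ T' ∈ univ.filter (fun T' : Finset (Fin n) => T'.Nonempty),
            δ T' * 2^(T'.card - 1) else 0) := by
  classical
  set F : Finset (Fin n) → ℤ := fun T =>
    ∑ T' ∈ univ.filter (fun T' : Finset (Fin n) => T ⊂ T'), δ T' * 2^(T'.card - 1 - T.card)
    with hF
  set Sig : ℤ := ∑ T' ∈ univ.filter (fun T' : Finset (Fin n) => T'.Nonempty),
    δ T' * 2^(T'.card - 1) with hSig
  set Ps := univ.filter (fun T : Finset (Fin n) =>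
    T.Nonempty ∧ S ⊆ T ∧ T.card % 2 = S.card % 2) with hPs
  set Pd := univ.filter (fun T : Finset (Fin n) =>
    T.Nonempty ∧ S ⊆ T ∧ T.card % 2 ≠ S.card % 2) with hPd
  -- swap lemma
  have hswap := droste_swap_sum n δ S
  -- identify the δ-filter with Pd
  have hPd' : univ.filter (fun T' : Finset (Fin n) =>
      S ⊆ T' ∧ (T'.card - S.card) % 2 = 1) = Pd := by
    rw [hPd]
    apply Finset.filter_congr
    intro T _
    constructor
    · rintro ⟨h1, h2⟩
      have hle : S.card ≤ T.card := Finset.card_le_card h1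
      have hpar : T.card % 2 ≠ S.card % 2 := by omega
      exact ⟨droste_nonempty_of n S T h1 hpar, h1, hpar⟩
    · rintro ⟨h0, h1, h2⟩
      have hle : S.card ≤ T.card := Finset.card_le_card h1
      exact ⟨h1, by omega⟩
  rw [hPd'] at hswap
  -- split sum over supersets of S
  have hA' : ∑ T ∈ univ.filter (fun T : Finset (Fin n) => T.Nonempty ∧ S ⊆ T),
      (-1:ℤ)^T.card * F T
      = (-1:ℤ)^S.card * (∑ T ∈ Ps, F T) - (-1:ℤ)^S.card * (∑ T ∈ Pd, F T) := by
    rw [← Finset.sum_filter_add_sum_filter_not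
      (univ.filter (fun T : Finset (Fin n) => T.Nonempty ∧ S ⊆ T))
      (fun T => T.card % 2 = S.card % 2)]
    have e1 : (univ.filter (fun T : Finset (Fin n) => T.Nonempty ∧ S ⊆ T)).filter
        (fun T => T.card % 2 = S.card % 2) = Ps := by
      rw [Finset.filter_filter, hPs]
      apply Finset.filter_congr
      intro T _
      tauto
    have e2 : (univ.filter (fun T : Finset (Fin n) => T.Nonempty ∧ S ⊆ T)).filter
        (fun T => ¬(T.card % 2 = S.card % 2)) = Pd := by
      rw [Finset.filter_filter, hPd]
      apply Finset.filter_congr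
      intro T _
      tauto
    rw [e1, e2, Finset.mul_sum, Finset.mul_sum]
    have e3 : ∀ T ∈ Ps, (-1:ℤ)^T.card * F T = (-1:ℤ)^S.card * F T := by
      intro T hT
      rw [hPs] at hT
      simp only [Finset.mem_filter] at hT
      rw [droste_pow_congr hT.2.2.2]
    have e4 : ∀ T ∈ Pd, (-1:ℤ)^T.card * F T = -((-1:ℤ)^S.card * F T) := by
      intro T hT
      rw [hPd] at hT
      simp only [Finset.mem_filter] at hT
      rw [droste_pow_ne hT.2.2.2]; ring
    rw [Finset.sum_congr rfl e3, Finset.sum_congr rfl e4, Finset.sum_neg_distrib]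
    ring
  -- relate full superset sum with nonempty superset sum
  have hfull : ∑ T ∈ univ.filter (fun T : Finset (Fin n) => S ⊆ T), (-1:ℤ)^T.card * F T
      = (∑ T ∈ univ.filter (fun T : Finset (Fin n) => T.Nonempty ∧ S ⊆ T),
          (-1:ℤ)^T.card * F T)
        + (if S = ∅ then Sig else 0) := by
    rcases Finset.eq_empty_or_nonempty S with hSe | hSne
    · subst hSe
      rw [if_pos rfl]
      have hsplit : univ.filter (fun T : Finset (Fin n) => (∅:Finset (Fin n)) ⊆ T)
          = insert (∅:Finset (Fin n)) (univ.filter (fun T : Finset (Fin n) =>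
              T.Nonempty ∧ (∅:Finset (Fin n)) ⊆ T)) := by
        ext T
        simp only [Finset.mem_filter, Finset.mem_univ, true_and, Finset.mem_insert,
          Finset.empty_subset, and_true]
        rcases Finset.eq_empty_or_nonempty T with hT | hT
        · simp [hT]
        · simp [hT, Finset.nonempty_iff_ne_empty.mp hT]
      have hnm : (∅:Finset (Fin n)) ∉ univ.filter (fun T : Finset (Fin n) =>
          T.Nonempty ∧ (∅:Finset (Fin n)) ⊆ T) := by simp
      rw [hsplit, Finset.sum_insert hnm]
      have hF0 : F (∅ : Finset (Fin n)) = Sig := by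
        rw [hF, hSig]
        apply Finset.sum_congr
        · apply Finset.filter_congr
          intro T _
          simp [Finset.empty_ssubset]
        · intro T' _
          simp
      simp [hF0]
      ring
    · rw [if_neg (Finset.nonempty_iff_ne_empty.mp hSne)]
      rw [add_zero]
      congr 1
      apply (Finset.filter_congr ?_).symm
      intro T _
      constructor
      · rintro ⟨-, h⟩; exact h
      · intro h; exact ⟨hSne.mono h, h⟩
  -- combine
  rw [hfull, hA'] at hswap
  -- hswap : s * ΣPs F - s * ΣPd F + ite = s * ΣPd δ
  rcases Finset.eq_empty_or_nonempty S with hSe | hSne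
  · subst hSe
    rw [if_pos rfl] at hswap ⊢
    simp only [Finset.card_empty, pow_zero, one_mul] at hswap
    linarith
  · have hne := Finset.nonempty_iff_ne_empty.mp hSne
    rw [if_neg hne] at hswap ⊢
    rcases neg_one_pow_eq_or ℤ S.card with hs | hs
    · rw [hs] at hswap; linarith
    · rw [hs] at hswap; linarith

/-- The explicit contrast levels `h_T, l_T = h_T - δ_T` defined by the Droste
formula satisfy the feasibility inequalities with equality. -/
theorem droste_equality (n : ℕ) (hn : 1 ≤ n)
    (δ h l : Finset (Fin n) → ℤ)
    (hδ : ∀ T : Finset (Fin n), T.Nonempty → 1 ≤ δ T)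
    (hh : ∀ T : Finset (Fin n), T.Nonempty →
      h T = (∑ T' ∈ univ.filter (fun T' : Finset (Fin n) => T'.Nonempty),
              δ T' * 2 ^ (T'.card - 1)) -
            ∑ T' ∈ univ.filter (fun T' : Finset (Fin n) => T ⊂ T'),
              δ T' * 2 ^ (T'.card - 1 - T.card))
    (hl : ∀ T : Finset (Fin n), T.Nonempty → l T = h T - δ T) :
    ∀ S : Finset (Fin n), S ⊂ univ →
      ∑ T ∈ univ.filter (fun T : Finset (Fin n) =>
          T.Nonempty ∧ S ⊆ T ∧ T.card % 2 = S.card % 2), h T =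
      ∑ T ∈ univ.filter (fun T : Finset (Fin n) =>
          T.Nonempty ∧ S ⊆ T ∧ T.card % 2 ≠ S.card % 2), l T := by
  intro S hSu
  classical
  set F : Finset (Fin n) → ℤ := fun T =>
    ∑ T' ∈ univ.filter (fun T' : Finset (Fin n) => T ⊂ T'), δ T' * 2^(T'.card - 1 - T.card)
    with hF
  set Sig : ℤ := ∑ T' ∈ univ.filter (fun T' : Finset (Fin n) => T'.Nonempty),
    δ T' * 2^(T'.card - 1) with hSig
  have hL : ∑ T ∈ univ.filter (fun T : Finset (Fin n) =>
      T.Nonempty ∧ S ⊆ T ∧ T.card % 2 = S.card % 2), h T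
      = ∑ T ∈ univ.filter (fun T : Finset (Fin n) =>
        T.Nonempty ∧ S ⊆ T ∧ T.card % 2 = S.card % 2), (Sig - F T) := by
    refine Finset.sum_congr rfl fun T hT => ?_
    simp only [Finset.mem_filter] at hT
    exact hh T hT.2.1
  have hR : ∑ T ∈ univ.filter (fun T : Finset (Fin n) =>
      T.Nonempty ∧ S ⊆ T ∧ T.card % 2 ≠ S.card % 2), l T
      = ∑ T ∈ univ.filter (fun T : Finset (Fin n) =>
        T.Nonempty ∧ S ⊆ T ∧ T.card % 2 ≠ S.card % 2), (Sig - F T - δ T) := by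
    refine Finset.sum_congr rfl fun T hT => ?_
    simp only [Finset.mem_filter] at hT
    rw [hl T hT.2.1, hh T hT.2.1]
  rw [hL, hR]
  have hcard := droste_card_eq n S hSu
  have hstar := droste_star n δ S
  rw [← hF, ← hSig] at hstar
  set Ps := univ.filter (fun T : Finset (Fin n) =>
    T.Nonempty ∧ S ⊆ T ∧ T.card % 2 = S.card % 2) with hPs
  set Pd := univ.filter (fun T : Finset (Fin n) =>
    T.Nonempty ∧ S ⊆ T ∧ T.card % 2 ≠ S.card % 2) with hPd
  rw [Finset.sum_sub_distrib, Finset.sum_sub_distrib, Finset.sum_sub_distrib,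
    Finset.sum_const, Finset.sum_const, nsmul_eq_mul, nsmul_eq_mul]
  set c : ℤ := if S = ∅ then 1 else 0 with hc
  have hS2 : (if S = ∅ then Sig else 0) = c * Sig := by
    by_cases hSe : S = ∅ <;> simp [hc, hSe]
  rw [hS2] at hstar
  rw [hc] at hcard  -- maybe unnecessary
  linear_combination Sig * hcard - hstar
end

section
/- Let $n\ge 1$ and suppose nonnegative integers $h_T \ge l_T$ (for nonempty $T\subseteq\{1,\dots,n\}$, with $h_\emptyset=l_\emptyset=0$) satisfy $h_T - l_T \ge 1$ for all nonempty $T$ and, for every $S\subsetneq\{1,\dots,n\}$, $\sum_{S\subseteq T,\ |T|\equiv|S|\bmod 2} h_T \le \sum_{S\subseteq T,\ |T|\not\equiv|S|\bmod 2} l_T$ (sums over $T\subseteq\{1,\dots,n\}$). Then $h_{\{1,\dots,n\}} \ge \sum_{\emptyset\neq T\subseteq\{1,\dots,n\}} 2^{|T|-1} = \frac{1}{2}(3^n - 1)$. -/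
open Finset

lemma negpow_congr (a b : ℕ) (hab : a % 2 = b % 2) : ((-1 : ℤ)) ^ a = (-1) ^ b := by
  rcases Nat.even_or_odd b with hb | hb
  · rw [hb.neg_one_pow, (Nat.even_iff.2 (by rw [hab]; exact Nat.even_iff.1 hb)).neg_one_pow]
  · rw [hb.neg_one_pow, (Nat.odd_iff.2 (by rw [hab]; exact Nat.odd_iff.1 hb)).neg_one_pow]

lemma parity_count {α : Type*} [DecidableEq α] (T : Finset α) (hT : T.Nonempty) :
    ((T.powerset.filter (fun S => S.card % 2 = T.card % 2)).card : ℤ) = 2 ^ (T.card - 1) ∧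
    ((T.powerset.filter (fun S => ¬ S.card % 2 = T.card % 2)).card : ℤ) = 2 ^ (T.card - 1) := by
  set e := (T.powerset.filter (fun S => S.card % 2 = T.card % 2)).card with he
  set o := (T.powerset.filter (fun S => ¬ S.card % 2 = T.card % 2)).card with ho
  have hsum : e + o = 2 ^ T.card := by
    rw [he, ho, card_filter_add_card_filter_not, card_powerset]
  have halt : (0 : ℤ) = (e : ℤ) * (-1) ^ T.card + (o : ℤ) * (-(-1) ^ T.card) := by
    rw [← sum_powerset_neg_one_pow_card_of_nonempty hT,
      ← sum_filter_add_sum_filter_not T.powerset (fun S => S.card % 2 = T.card % 2)]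
    congr 1
    · rw [sum_congr rfl (fun x hx => negpow_congr x.card T.card (mem_filter.1 hx).2),
        sum_const, nsmul_eq_mul]
    · have : ∀ x ∈ T.powerset.filter (fun S => ¬ S.card % 2 = T.card % 2),
          ((-1 : ℤ)) ^ x.card = -(-1) ^ T.card := by
        intro x hx
        have hne := (mem_filter.1 hx).2
        have : x.card % 2 = (T.card + 1) % 2 := by omega
        rw [negpow_congr x.card (T.card + 1) this, pow_succ]; ring
      rw [sum_congr rfl this, sum_const, nsmul_eq_mul]
  have heo : e = o := by
    have h1 : ((e : ℤ) - o) * (-1) ^ T.card = 0 := by linarith [halt]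
    rcases mul_eq_zero.1 h1 with h2 | h2
    · exact_mod_cast sub_eq_zero.1 h2
    · exact absurd h2 (by positivity)
  have hc : T.card - 1 + 1 = T.card := Nat.succ_pred_eq_of_pos (card_pos.2 hT)
  have h3 : 2 * e = 2 * 2 ^ (T.card - 1) := by
    rw [← pow_succ', hc, ← hsum, heo]; ring
  have he2 : e = 2 ^ (T.card - 1) := by omega
  refine ⟨by exact_mod_cast he2, by rw [← heo]; exact_mod_cast he2⟩

/-- An extended visual cryptography scheme on `n` transparencies needs at least
`(3ⁿ-1)/2` subpixels: `h_{{1,…,n}} ≥ ∑_{∅≠T} 2^{|T|-1} = (3ⁿ-1)/2`. -/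
theorem pixel_expansion_lower_bound (n : ℕ) (hn : 1 ≤ n)
    (h l : Finset (Fin n) → ℤ)
    (h0 : h ∅ = 0) (l0 : l ∅ = 0)
    (hl0 : ∀ T : Finset (Fin n), 0 ≤ l T)
    (hlh : ∀ T : Finset (Fin n), T.Nonempty → l T + 1 ≤ h T)
    (hineq : ∀ S : Finset (Fin n), S ⊂ univ →
      ∑ T ∈ univ.filter (fun T : Finset (Fin n) =>
          S ⊆ T ∧ T.card % 2 = S.card % 2), h T ≤
      ∑ T ∈ univ.filter (fun T : Finset (Fin n) =>
          S ⊆ T ∧ T.card % 2 ≠ S.card % 2), l T) :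
    h univ ≥ ∑ T ∈ univ.filter (fun T : Finset (Fin n) => T.Nonempty),
        (2 : ℤ) ^ (T.card - 1) ∧
    2 * ∑ T ∈ univ.filter (fun T : Finset (Fin n) => T.Nonempty),
        (2 : ℤ) ^ (T.card - 1) = 3 ^ n - 1 := by
  classical
  set F : Finset (Fin n) → ℤ := fun S =>
    (∑ T ∈ univ.filter (fun T : Finset (Fin n) =>
        S ⊆ T ∧ T.card % 2 = S.card % 2), h T) -
    (∑ T ∈ univ.filter (fun T : Finset (Fin n) =>
        S ⊆ T ∧ T.card % 2 ≠ S.card % 2), l T) with hFdef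
  have hFle : ∀ S : Finset (Fin n), S ≠ univ → F S ≤ 0 := fun S hS =>
    sub_nonpos.2 (hineq S (ssubset_univ_iff.2 hS))
  -- F univ = h univ
  have hFu : F univ = h univ := by
    have h1 : univ.filter (fun T : Finset (Fin n) =>
        univ ⊆ T ∧ T.card % 2 = (univ : Finset (Fin n)).card % 2) = {univ} := by
      ext T
      simp only [mem_filter, mem_univ, true_and, mem_singleton, univ_subset_iff]
      exact ⟨fun ⟨h1, _⟩ => h1, fun h1 => ⟨h1, by rw [h1]⟩⟩
    have h2 : univ.filter (fun T : Finset (Fin n) =>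
        univ ⊆ T ∧ T.card % 2 ≠ (univ : Finset (Fin n)).card % 2) = ∅ := by
      ext T
      simp only [mem_filter, mem_univ, true_and, notMem_empty, iff_false, not_and,
        univ_subset_iff]
      rintro rfl
      simp
    rw [hFdef]
    simp only
    rw [h1, h2, sum_singleton, sum_empty, sub_zero]
  -- filters over S for fixed T
  have hfe : ∀ T : Finset (Fin n),
      univ.filter (fun S : Finset (Fin n) => S ⊆ T ∧ T.card % 2 = S.card % 2)
        = T.powerset.filter (fun S => S.card % 2 = T.card % 2) := by
    intro T; ext S
    simp only [mem_filter, mem_univ, true_and, mem_powerset]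
    exact ⟨fun ⟨a, b⟩ => ⟨a, b.symm⟩, fun ⟨a, b⟩ => ⟨a, b.symm⟩⟩
  have hfo : ∀ T : Finset (Fin n),
      univ.filter (fun S : Finset (Fin n) => S ⊆ T ∧ T.card % 2 ≠ S.card % 2)
        = T.powerset.filter (fun S => ¬ S.card % 2 = T.card % 2) := by
    intro T; ext S
    simp only [mem_filter, mem_univ, true_and, mem_powerset, Ne]
    exact ⟨fun ⟨a, b⟩ => ⟨a, fun hb => b hb.symm⟩, fun ⟨a, b⟩ => ⟨a, fun hb => b hb.symm⟩⟩
  -- the double-counting identity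
  have key : ∑ S ∈ (univ : Finset (Finset (Fin n))), F S
      = ∑ T ∈ univ.filter (fun T : Finset (Fin n) => T.Nonempty),
          ((2 : ℤ) ^ (T.card - 1) * (h T - l T)) := by
    calc ∑ S ∈ (univ : Finset (Finset (Fin n))), F S
        = ∑ S ∈ (univ : Finset (Finset (Fin n))),
            ((∑ T ∈ univ, if S ⊆ T ∧ T.card % 2 = S.card % 2 then h T else 0)
              - (∑ T ∈ univ, if S ⊆ T ∧ T.card % 2 ≠ S.card % 2 then l T else 0)) := by
          refine sum_congr rfl fun S _ => ?_
          rw [hFdef]; simp only; rw [sum_filter, sum_filter]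
      _ = ∑ T ∈ (univ : Finset (Finset (Fin n))),
            ((∑ S ∈ univ, if S ⊆ T ∧ T.card % 2 = S.card % 2 then h T else 0)
              - (∑ S ∈ univ, if S ⊆ T ∧ T.card % 2 ≠ S.card % 2 then l T else 0)) := by
          rw [sum_sub_distrib, sum_sub_distrib]
          congr 1
          · exact sum_comm
          · exact sum_comm
      _ = ∑ T ∈ (univ : Finset (Finset (Fin n))),
            (((univ.filter (fun S : Finset (Fin n) =>
                S ⊆ T ∧ T.card % 2 = S.card % 2)).card : ℤ) * h T
              - ((univ.filter (fun S : Finset (Fin n) =>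
                S ⊆ T ∧ T.card % 2 ≠ S.card % 2)).card : ℤ) * l T) := by
          refine sum_congr rfl fun T _ => ?_
          rw [← sum_filter, ← sum_filter, sum_const, sum_const, nsmul_eq_mul, nsmul_eq_mul]
      _ = ∑ T ∈ (univ : Finset (Finset (Fin n))),
            (if T.Nonempty then (2 : ℤ) ^ (T.card - 1) * (h T - l T) else 0) := by
          refine sum_congr rfl fun T _ => ?_
          by_cases hT : T.Nonempty
          · rw [if_pos hT, hfe T, hfo T, (parity_count T hT).1, (parity_count T hT).2]
            ring
          · rw [if_neg hT]
            rw [not_nonempty_iff_eq_empty] at hT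
            subst hT
            rw [h0, l0]
            ring
      _ = _ := (sum_filter _ _).symm
  -- sum of F is at most h univ
  have hbound : ∑ S ∈ (univ : Finset (Finset (Fin n))), F S ≤ h univ := by
    rw [← add_sum_erase (univ : Finset (Finset (Fin n))) F (mem_univ univ)]
    have h2 : ∑ S ∈ (univ : Finset (Finset (Fin n))).erase univ, F S ≤ 0 :=
      sum_nonpos fun S hS => hFle S (ne_of_mem_erase hS)
    rw [hFu]
    linarith
  constructor
  · -- part 1
    have h1 : ∑ T ∈ univ.filter (fun T : Finset (Fin n) => T.Nonempty),
        (2 : ℤ) ^ (T.card - 1)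
        ≤ ∑ T ∈ univ.filter (fun T : Finset (Fin n) => T.Nonempty),
            ((2 : ℤ) ^ (T.card - 1) * (h T - l T)) := by
      refine sum_le_sum fun T hT => ?_
      have h2 : (1 : ℤ) ≤ h T - l T := by
        have := hlh T (mem_filter.1 hT).2; linarith
      have h3 : (0 : ℤ) ≤ 2 ^ (T.card - 1) := by positivity
      nlinarith
    rw [ge_iff_le]
    calc _ ≤ _ := h1
      _ = ∑ S ∈ (univ : Finset (Finset (Fin n))), F S := key.symm
      _ ≤ h univ := hbound
  · -- part 2
    have h1 : ∀ T ∈ univ.filter (fun T : Finset (Fin n) => T.Nonempty),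
        2 * (2 : ℤ) ^ (T.card - 1) = 2 ^ T.card := by
      intro T hT
      have hT' := (mem_filter.1 hT).2
      rw [← pow_succ', Nat.sub_add_cancel (card_pos.2 hT')]
    have hflt : univ.filter (fun T : Finset (Fin n) => T.Nonempty)
        = (univ : Finset (Finset (Fin n))).erase ∅ := by
      ext T
      simp [nonempty_iff_ne_empty]
    have htot : ∑ T ∈ (univ : Finset (Finset (Fin n))), (2 : ℤ) ^ T.card = 3 ^ n := by
      rw [← powerset_univ, sum_powerset_apply_card (fun m => (2 : ℤ) ^ m), card_univ,
        Fintype.card_fin]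
      have h3 : (3 : ℤ) ^ n = (2 + 1) ^ n := by norm_num
      rw [h3, add_pow]
      refine sum_congr rfl fun k _ => ?_
      rw [nsmul_eq_mul]
      ring
    rw [mul_sum, sum_congr rfl h1, hflt]
    have := add_sum_erase (univ : Finset (Finset (Fin n))) (fun T => (2 : ℤ) ^ T.card)
      (mem_univ (∅ : Finset (Fin n)))
    simp only [card_empty, pow_zero] at this
    linarith [htot]
end

section
/- Let $n\ge 1$ and suppose nonnegative integers $h_T \ge l_T$ (nonempty $T\subseteq\{1,\dots,n\}$, $h_\emptyset=l_\emptyset=0$) satisfy for every $S\subsetneq\{1,\dots,n\}$ the inequality $\sum_{S\subseteq T,\ |T|\equiv|S|\bmod 2} h_T \le \sum_{S\subseteq T,\ |T|\not\equiv|S|\bmod 2} l_T$. Setting $\delta_T = h_T - l_T$, one has $h_{\{1,\dots,n\}} \ge \sum_{\emptyset\neq T\subseteq\{1,\dots,n\}} \delta_T\, 2^{|T|-1}$. -/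
open Finset

private lemma parity_count_eq {n : ℕ} (t : Finset (Fin n)) (ht : t.Nonempty) :
    (univ.filter (fun S : Finset (Fin n) => S ⊆ t ∧ t.card % 2 = S.card % 2)).card =
    (univ.filter (fun S : Finset (Fin n) => S ⊆ t ∧ t.card % 2 ≠ S.card % 2)).card := by
  obtain ⟨x, hx⟩ := ht
  apply Finset.card_bij' (fun S _ => if x ∈ S then S.erase x else insert x S)
    (fun S _ => if x ∈ S then S.erase x else insert x S)
  · intro S _
    by_cases hxS : x ∈ S
    · simp [hxS, notMem_erase, insert_erase]
    · simp [hxS, erase_insert]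
  · intro S _
    by_cases hxS : x ∈ S
    · simp [hxS, notMem_erase, insert_erase]
    · simp [hxS, erase_insert]
  · intro S hS
    simp only [mem_filter, mem_univ, true_and] at hS
    obtain ⟨hSt, hpar⟩ := hS
    by_cases hxS : x ∈ S
    · have h2 : 1 ≤ S.card := card_pos.mpr ⟨x, hxS⟩
      simp only [mem_filter, mem_univ, true_and, hxS, if_true, card_erase_of_mem hxS]
      exact ⟨(erase_subset x S).trans hSt, by omega⟩
    · simp only [mem_filter, mem_univ, true_and, hxS, if_false, card_insert_of_notMem hxS]
      exact ⟨insert_subset hx hSt, by omega⟩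
  · intro S hS
    simp only [mem_filter, mem_univ, true_and] at hS
    obtain ⟨hSt, hpar⟩ := hS
    by_cases hxS : x ∈ S
    · have h2 : 1 ≤ S.card := card_pos.mpr ⟨x, hxS⟩
      simp only [mem_filter, mem_univ, true_and, hxS, if_true, card_erase_of_mem hxS]
      exact ⟨(erase_subset x S).trans hSt, by omega⟩
    · simp only [mem_filter, mem_univ, true_and, hxS, if_false, card_insert_of_notMem hxS]
      exact ⟨insert_subset hx hSt, by omega⟩

private lemma parity_count_total {n : ℕ} (t : Finset (Fin n)) :
    (univ.filter (fun S : Finset (Fin n) => S ⊆ t ∧ t.card % 2 = S.card % 2)).card +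
    (univ.filter (fun S : Finset (Fin n) => S ⊆ t ∧ t.card % 2 ≠ S.card % 2)).card
      = 2 ^ t.card := by
  have hsub : (univ.filter (fun S : Finset (Fin n) => S ⊆ t)) = t.powerset := by
    ext S; simp [mem_powerset]
  have h1 := Finset.card_filter_add_card_filter_not
    (s := univ.filter (fun S : Finset (Fin n) => S ⊆ t))
    (p := fun S => t.card % 2 = S.card % 2)
  rw [filter_filter, filter_filter] at h1
  rw [hsub, card_powerset] at h1
  exact h1

private lemma count_eq {n : ℕ} (t : Finset (Fin n)) (ht : t.Nonempty) :
    (univ.filter (fun S : Finset (Fin n) => S ⊆ t ∧ t.card % 2 = S.card % 2)).card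
      = 2 ^ (t.card - 1) := by
  have h1 := parity_count_eq t ht
  have h2 := parity_count_total t
  have h3 : 1 ≤ t.card := card_pos.mpr ht
  have h4 : 2 ^ t.card = 2 ^ (t.card - 1) * 2 := by
    rw [← pow_succ]; congr 1; omega
  omega

private lemma count_ne {n : ℕ} (t : Finset (Fin n)) (ht : t.Nonempty) :
    (univ.filter (fun S : Finset (Fin n) => S ⊆ t ∧ t.card % 2 ≠ S.card % 2)).card
      = 2 ^ (t.card - 1) := by
  have h1 := parity_count_eq t ht
  rw [← h1]; exact count_eq t ht

/-- Under the feasibility inequalities, `h_{{1,…,n}} ≥ ∑_{∅≠T} δ_T 2^{|T|-1}`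
where `δ_T = h_T - l_T`. -/
theorem weighted_lower_bound (n : ℕ) (hn : 1 ≤ n)
    (h l : Finset (Fin n) → ℤ)
    (h0 : h ∅ = 0) (l0 : l ∅ = 0)
    (hl0 : ∀ T : Finset (Fin n), 0 ≤ l T)
    (hlh : ∀ T : Finset (Fin n), l T ≤ h T)
    (hineq : ∀ S : Finset (Fin n), S ⊂ univ →
      ∑ T ∈ univ.filter (fun T : Finset (Fin n) =>
          S ⊆ T ∧ T.card % 2 = S.card % 2), h T ≤
      ∑ T ∈ univ.filter (fun T : Finset (Fin n) =>
          S ⊆ T ∧ T.card % 2 ≠ S.card % 2), l T) :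
    h univ ≥ ∑ T ∈ univ.filter (fun T : Finset (Fin n) => T.Nonempty),
      (h T - l T) * 2 ^ (T.card - 1) := by
  classical
  set A : Finset (Fin n) → ℤ := fun S =>
    ∑ T ∈ univ.filter (fun T : Finset (Fin n) =>
        S ⊆ T ∧ T.card % 2 = S.card % 2), h T with hA_def
  set B : Finset (Fin n) → ℤ := fun S =>
    ∑ T ∈ univ.filter (fun T : Finset (Fin n) =>
        S ⊆ T ∧ T.card % 2 ≠ S.card % 2), l T with hB_def
  have hproper : ((univ : Finset (Finset (Fin n))).erase univ) =
      univ.filter (fun S : Finset (Fin n) => S ⊂ univ) := by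
    ext S
    simp [Finset.ssubset_univ_iff, eq_comm, Finset.mem_erase]
  have step1 : ∑ S ∈ (univ : Finset (Finset (Fin n))).erase univ, A S ≤
      ∑ S ∈ (univ : Finset (Finset (Fin n))).erase univ, B S := by
    apply Finset.sum_le_sum
    intro S hS
    rw [hproper] at hS
    exact hineq S ((mem_filter.mp hS).2)
  -- swap sums
  have swapA : ∑ S ∈ (univ : Finset (Finset (Fin n))), A S =
      ∑ T ∈ (univ : Finset (Finset (Fin n))),
        ((univ.filter (fun S : Finset (Fin n) =>
          S ⊆ T ∧ T.card % 2 = S.card % 2)).card : ℤ) * h T := by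
    calc ∑ S ∈ (univ : Finset (Finset (Fin n))), A S
        = ∑ S ∈ (univ : Finset (Finset (Fin n))), ∑ T ∈ (univ : Finset (Finset (Fin n))),
            (if S ⊆ T ∧ T.card % 2 = S.card % 2 then h T else 0) := by
          exact Finset.sum_congr rfl fun S _ => Finset.sum_filter _ _
      _ = ∑ T ∈ (univ : Finset (Finset (Fin n))), ∑ S ∈ (univ : Finset (Finset (Fin n))),
            (if S ⊆ T ∧ T.card % 2 = S.card % 2 then h T else 0) := Finset.sum_comm
      _ = _ := by
          refine Finset.sum_congr rfl fun T _ => ?_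
          rw [← Finset.sum_filter, Finset.sum_const, nsmul_eq_mul]
  have swapB : ∑ S ∈ (univ : Finset (Finset (Fin n))), B S =
      ∑ T ∈ (univ : Finset (Finset (Fin n))),
        ((univ.filter (fun S : Finset (Fin n) =>
          S ⊆ T ∧ T.card % 2 ≠ S.card % 2)).card : ℤ) * l T := by
    calc ∑ S ∈ (univ : Finset (Finset (Fin n))), B S
        = ∑ S ∈ (univ : Finset (Finset (Fin n))), ∑ T ∈ (univ : Finset (Finset (Fin n))),
            (if S ⊆ T ∧ T.card % 2 ≠ S.card % 2 then l T else 0) := by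
          exact Finset.sum_congr rfl fun S _ => Finset.sum_filter _ _
      _ = ∑ T ∈ (univ : Finset (Finset (Fin n))), ∑ S ∈ (univ : Finset (Finset (Fin n))),
            (if S ⊆ T ∧ T.card % 2 ≠ S.card % 2 then l T else 0) := Finset.sum_comm
      _ = _ := by
          refine Finset.sum_congr rfl fun T _ => ?_
          rw [← Finset.sum_filter, Finset.sum_const, nsmul_eq_mul]
  -- evaluate total sums
  have totA : ∑ S ∈ (univ : Finset (Finset (Fin n))), A S =
      ∑ T ∈ univ.filter (fun T : Finset (Fin n) => T.Nonempty),
        h T * 2 ^ (T.card - 1) := by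
    rw [swapA, ← Finset.sum_filter_add_sum_filter_not univ
      (fun T : Finset (Fin n) => T.Nonempty)]
    have hz : ∑ T ∈ univ.filter (fun T : Finset (Fin n) => ¬ T.Nonempty),
        ((univ.filter (fun S : Finset (Fin n) =>
          S ⊆ T ∧ T.card % 2 = S.card % 2)).card : ℤ) * h T = 0 := by
      apply Finset.sum_eq_zero
      intro T hT
      simp only [mem_filter, not_nonempty_iff_eq_empty] at hT
      rw [hT.2, h0, mul_zero]
    rw [hz, add_zero]
    refine Finset.sum_congr rfl fun T hT => ?_
    simp only [mem_filter] at hT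
    rw [count_eq T hT.2]
    push_cast
    ring
  have totB : ∑ S ∈ (univ : Finset (Finset (Fin n))), B S =
      ∑ T ∈ univ.filter (fun T : Finset (Fin n) => T.Nonempty),
        l T * 2 ^ (T.card - 1) := by
    rw [swapB, ← Finset.sum_filter_add_sum_filter_not univ
      (fun T : Finset (Fin n) => T.Nonempty)]
    have hz : ∑ T ∈ univ.filter (fun T : Finset (Fin n) => ¬ T.Nonempty),
        ((univ.filter (fun S : Finset (Fin n) =>
          S ⊆ T ∧ T.card % 2 ≠ S.card % 2)).card : ℤ) * l T = 0 := by
      apply Finset.sum_eq_zero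
      intro T hT
      simp only [mem_filter, not_nonempty_iff_eq_empty] at hT
      rw [hT.2, l0, mul_zero]
    rw [hz, add_zero]
    refine Finset.sum_congr rfl fun T hT => ?_
    simp only [mem_filter] at hT
    rw [count_ne T hT.2]
    push_cast
    ring
  -- values at S = univ
  have hAuniv : A univ = h univ := by
    have : (univ.filter (fun T : Finset (Fin n) =>
        univ ⊆ T ∧ T.card % 2 = (univ : Finset (Fin n)).card % 2)) = {univ} := by
      ext T
      simp only [mem_filter, mem_univ, true_and, mem_singleton]
      constructor
      · rintro ⟨hT, -⟩; exact (univ_subset_iff.mp hT)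
      · rintro rfl; exact ⟨subset_rfl, rfl⟩
    simp only [hA_def, this, Finset.sum_singleton]
  have hBuniv : B univ = 0 := by
    have : (univ.filter (fun T : Finset (Fin n) =>
        univ ⊆ T ∧ T.card % 2 ≠ (univ : Finset (Fin n)).card % 2)) = ∅ := by
      ext T
      simp only [mem_filter, mem_univ, true_and, notMem_empty, iff_false]
      rintro ⟨hT, hpar⟩
      exact hpar (by rw [univ_subset_iff.mp hT])
    simp only [hB_def, this, Finset.sum_empty]
  have splitA : ∑ S ∈ (univ : Finset (Finset (Fin n))).erase univ, A S + A univ =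
      ∑ S ∈ (univ : Finset (Finset (Fin n))), A S :=
    Finset.sum_erase_add _ _ (mem_univ _)
  have splitB : ∑ S ∈ (univ : Finset (Finset (Fin n))).erase univ, B S + B univ =
      ∑ S ∈ (univ : Finset (Finset (Fin n))), B S :=
    Finset.sum_erase_add _ _ (mem_univ _)
  have goalsum : ∑ T ∈ univ.filter (fun T : Finset (Fin n) => T.Nonempty),
      (h T - l T) * 2 ^ (T.card - 1) =
      (∑ T ∈ univ.filter (fun T : Finset (Fin n) => T.Nonempty),
        h T * 2 ^ (T.card - 1)) -
      (∑ T ∈ univ.filter (fun T : Finset (Fin n) => T.Nonempty),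
        l T * 2 ^ (T.card - 1)) := by
    rw [← Finset.sum_sub_distrib]
    exact Finset.sum_congr rfl fun T _ => by ring
  rw [ge_iff_le, goalsum]
  linarith [step1, totA, totB, hAuniv, hBuniv, splitA, splitB]
end

section
/- Let $m\ge 1$ and suppose for each nonempty $T\subseteq\{1,\dots,n\}$ the contrast $\alpha_T = (h_T-l_T)/m$, where $0\le l_T\le h_T\le m$ are integers satisfying for every $S\subsetneq\{1,\dots,n\}$ the inequality $\sum_{S\subseteq T,\ |T|\equiv|S|\bmod 2} h_T \le \sum_{S\subseteq T,\ |T|\not\equiv|S|\bmod 2} l_T$ (with $h_\emptyset=l_\emptyset=0$) and $h_{\{1,\dots,n\}}\le m$. Then $\sum_{\emptyset\neq T\subseteq\{1,\dots,n\}} 2^{|T|-1}\alpha_T \le 1$. -/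
open Finset

/-! Sum the feasibility inequalities over all proper subsets `S`. Each `T` then collects `h T` once
for every `S ⊆ T` of the parity of `T` and `l T` once for every `S ⊆ T` of the other parity. Since
`∑_{S ⊆ T} (-1)^|S|` vanishes for nonempty `T`, both counts are `2^(|T|-1)`, while `∅` has one
subset of its own parity and none of the other. The missing term `S = univ` is just `h univ`, so
`∑_{T ≠ ∅} 2^(|T|-1) (h T - l T) ≤ h univ - h ∅ ≤ m`. -/

section Parity

variable {α : Type*}

def sameParitySubsets (T : Finset α) : Finset (Finset α) :=
  T.powerset.filter fun S => #T % 2 = #S % 2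

def oppositeParitySubsets (T : Finset α) : Finset (Finset α) :=
  T.powerset.filter fun S => #T % 2 ≠ #S % 2

lemma card_sameParitySubsets_add_card_oppositeParitySubsets (T : Finset α) :
    #(sameParitySubsets T) + #(oppositeParitySubsets T) = 2 ^ #T := by
  rw [sameParitySubsets, oppositeParitySubsets, card_filter_add_card_filter_not, card_powerset]

lemma card_sameParitySubsets [DecidableEq α] (T : Finset α) :
    #(sameParitySubsets T) = #(oppositeParitySubsets T) + if T = ∅ then 1 else 0 := by
  have hsign : ∀ S ∈ T.powerset,
      (-1 : ℤ) ^ (#T + #S) = if #T % 2 = #S % 2 then 1 else -1 := by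
    intro S _
    split_ifs with hpar
    · exact Even.neg_one_pow (by rw [Nat.even_add, Nat.even_iff, Nat.even_iff]; omega)
    · exact Odd.neg_one_pow (by rw [Nat.odd_add, Nat.odd_iff, Nat.even_iff]; omega)
  have hdiff : (#(sameParitySubsets T) : ℤ) - #(oppositeParitySubsets T) =
      if T = ∅ then 1 else 0 :=
    calc (#(sameParitySubsets T) : ℤ) - #(oppositeParitySubsets T)
        = ∑ S ∈ T.powerset, (-1 : ℤ) ^ (#T + #S) := by
          rw [sum_congr rfl hsign, sum_ite, sum_const, sum_const, sameParitySubsets,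
            oppositeParitySubsets]
          simp only [nsmul_eq_mul, mul_one, mul_neg, sub_eq_add_neg]
      _ = (-1) ^ #T * ∑ S ∈ T.powerset, (-1 : ℤ) ^ #S := by
          simp only [pow_add, mul_sum]
      _ = if T = ∅ then 1 else 0 := by
          rw [sum_powerset_neg_one_pow_card]
          split_ifs with hT <;> simp [hT]
  split_ifs at hdiff ⊢ <;> omega

lemma card_oppositeParitySubsets {T : Finset α} (hT : T.Nonempty) :
    #(oppositeParitySubsets T) = 2 ^ (#T - 1) := by
  classical
  have hsum := card_sameParitySubsets_add_card_oppositeParitySubsets T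
  have hsame := card_sameParitySubsets T
  rw [if_neg hT.ne_empty] at hsame
  have hpow : 2 ^ #T = 2 * 2 ^ (#T - 1) := by
    rw [← pow_succ', Nat.sub_add_cancel hT.card_pos]
  omega

lemma sum_card_oppositeParitySubsets_smul [Fintype α] {R : Type*} [AddCommMonoid R]
    (f : Finset α → R) :
    ∑ T, #(oppositeParitySubsets T) • f T =
      ∑ T ∈ univ.filter (fun T => T.Nonempty), 2 ^ (#T - 1) • f T := by
  rw [sum_filter]
  refine sum_congr rfl fun T _ => ?_
  split_ifs with hT
  · rw [card_oppositeParitySubsets hT]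
  · simp [not_nonempty_iff_eq_empty.mp hT, oppositeParitySubsets, filter_singleton]

end Parity

section DoubleCounting

variable {α R : Type*} [Fintype α] [DecidableEq α]

lemma sum_sum_superset_sameParity [AddCommMonoid R] (f : Finset α → R) :
    ∑ S, ∑ T ∈ univ.filter (fun T => S ⊆ T ∧ #T % 2 = #S % 2), f T =
      ∑ T, #(sameParitySubsets T) • f T := by
  rw [sum_comm' (t' := univ) (s' := sameParitySubsets)]
  · simp only [sum_const]
  · intro S T
    simp [sameParitySubsets, eq_comm]

lemma sum_sum_superset_oppositeParity [AddCommMonoid R] (f : Finset α → R) :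
    ∑ S, ∑ T ∈ univ.filter (fun T => S ⊆ T ∧ #T % 2 ≠ #S % 2), f T =
      ∑ T, #(oppositeParitySubsets T) • f T := by
  rw [sum_comm' (t' := univ) (s' := oppositeParitySubsets)]
  · simp only [sum_const]
  · intro S T
    simp [oppositeParitySubsets, eq_comm]

lemma filter_univ_subset_sameParity :
    univ.filter (fun T : Finset α => univ ⊆ T ∧ #T % 2 = #(univ : Finset α) % 2) = {univ} := by
  ext T
  simp only [mem_filter, mem_univ, true_and, univ_subset_iff, mem_singleton, and_iff_left_iff_imp]
  rintro rfl
  rfl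

lemma filter_univ_subset_oppositeParity :
    univ.filter (fun T : Finset α => univ ⊆ T ∧ #T % 2 ≠ #(univ : Finset α) % 2) = ∅ := by
  ext T
  simp only [mem_filter, mem_univ, true_and, univ_subset_iff, notMem_empty, iff_false, not_and,
    not_not]
  rintro rfl
  rfl

lemma sum_card_oppositeParitySubsets_smul_sub_le
    [AddCommGroup R] [PartialOrder R] [IsOrderedAddMonoid R] (h l : Finset α → R)
    (hineq : ∀ S : Finset α, S ⊂ univ →
      ∑ T ∈ univ.filter (fun T => S ⊆ T ∧ #T % 2 = #S % 2), h T ≤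
      ∑ T ∈ univ.filter (fun T => S ⊆ T ∧ #T % 2 ≠ #S % 2), l T) :
    ∑ T, #(oppositeParitySubsets T) • (h T - l T) ≤ h univ - h ∅ := by
  set D : Finset α → R := fun S =>
    ∑ T ∈ univ.filter (fun T => S ⊆ T ∧ #T % 2 = #S % 2), h T -
      ∑ T ∈ univ.filter (fun T => S ⊆ T ∧ #T % 2 ≠ #S % 2), l T
  have hD_univ : D univ = h univ := by
    simp only [D, filter_univ_subset_sameParity, filter_univ_subset_oppositeParity,
      sum_singleton, sum_empty, sub_zero]
  have hD_proper : ∀ S ∈ univ.erase univ, D S ≤ 0 := fun S hS =>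
    sub_nonpos.mpr (hineq S (ssubset_univ_iff.mpr (ne_of_mem_erase hS)))
  have hsum : ∑ S, D S = ∑ T, #(oppositeParitySubsets T) • (h T - l T) + h ∅ := by
    simp only [D, sum_sub_distrib, sum_sum_superset_sameParity, sum_sum_superset_oppositeParity,
      card_sameParitySubsets, add_smul, ite_smul, one_smul, zero_smul, sum_add_distrib,
      sum_ite_eq', mem_univ, if_true, smul_sub]
    abel
  calc ∑ T, #(oppositeParitySubsets T) • (h T - l T) = ∑ S, D S - h ∅ := by
        rw [hsum, add_sub_cancel_right]
    _ = h univ + ∑ S ∈ univ.erase univ, D S - h ∅ := by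
        rw [← add_sum_erase _ _ (mem_univ _), hD_univ]
    _ ≤ h univ - h ∅ :=
        sub_le_sub_right (add_le_of_nonpos_right (sum_nonpos hD_proper)) _

end DoubleCounting

theorem contrast_tradeoff_general (n : ℕ) (m : ℕ)
    (h l : Finset (Fin n) → ℤ)
    (h0 : h ∅ = 0)
    (hhm : ∀ T : Finset (Fin n), h T ≤ (m : ℤ))
    (hineq : ∀ S : Finset (Fin n), S ⊂ univ →
      ∑ T ∈ univ.filter (fun T : Finset (Fin n) =>
          S ⊆ T ∧ T.card % 2 = S.card % 2), h T ≤
      ∑ T ∈ univ.filter (fun T : Finset (Fin n) =>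
          S ⊆ T ∧ T.card % 2 ≠ S.card % 2), l T)
    (α : Finset (Fin n) → ℚ)
    (hα : ∀ T : Finset (Fin n), T.Nonempty → α T = ((h T : ℚ) - (l T : ℚ)) / m) :
    ∑ T ∈ univ.filter (fun T : Finset (Fin n) => T.Nonempty),
      2 ^ (T.card - 1) * α T ≤ 1 := by
  have key : ∑ T ∈ univ.filter (fun T : Finset (Fin n) => T.Nonempty),
      2 ^ (#T - 1) * (h T - l T) ≤ (m : ℤ) := by
    have hle := sum_card_oppositeParitySubsets_smul_sub_le h l hineq
    rw [sum_card_oppositeParitySubsets_smul, h0, sub_zero] at hle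
    simpa only [nsmul_eq_mul, Nat.cast_pow, Nat.cast_ofNat] using hle.trans (hhm univ)
  calc ∑ T ∈ univ.filter (fun T : Finset (Fin n) => T.Nonempty), 2 ^ (#T - 1) * α T
      = ((∑ T ∈ univ.filter (fun T : Finset (Fin n) => T.Nonempty),
          2 ^ (#T - 1) * (h T - l T) : ℤ) : ℚ) / m := by
        push_cast
        rw [sum_div]
        exact sum_congr rfl fun T hT => by rw [hα T (mem_filter.mp hT).2, mul_div_assoc]
    _ ≤ 1 := div_le_one_of_le₀ (by exact_mod_cast key) m.cast_nonneg

/-- Contrast trade-off: `∑_{∅≠T} 2^{|T|-1} α_T ≤ 1`, where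
`α_T = (h_T - l_T)/m`. -/
theorem contrast_tradeoff (n : ℕ) (hn : 1 ≤ n) (m : ℕ) (hm : 1 ≤ m)
    (h l : Finset (Fin n) → ℤ)
    (h0 : h ∅ = 0) (l0 : l ∅ = 0)
    (hl0 : ∀ T : Finset (Fin n), 0 ≤ l T)
    (hlh : ∀ T : Finset (Fin n), l T ≤ h T)
    (hhm : ∀ T : Finset (Fin n), h T ≤ (m : ℤ))
    (hineq : ∀ S : Finset (Fin n), S ⊂ univ →
      ∑ T ∈ univ.filter (fun T : Finset (Fin n) =>
          S ⊆ T ∧ T.card % 2 = S.card % 2), h T ≤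
      ∑ T ∈ univ.filter (fun T : Finset (Fin n) =>
          S ⊆ T ∧ T.card % 2 ≠ S.card % 2), l T)
    (α : Finset (Fin n) → ℚ)
    (hα : ∀ T : Finset (Fin n), T.Nonempty → α T = ((h T : ℚ) - (l T : ℚ)) / m) :
    ∑ T ∈ univ.filter (fun T : Finset (Fin n) => T.Nonempty),
      2 ^ (T.card - 1) * α T ≤ 1 :=
  contrast_tradeoff_general n m h l h0 hhm hineq α hα
end

section
/- Let $n\ge 2$ be even. Define, for nonempty $T\subsetneq\{1,\dots,n\}$, $\delta_T=1$ and $\delta_{\{1,\dots,n\}}=0$, and let $h_T$ be given by $h_T=\sum_{\emptyset\neq T'\subseteq\{1,\dots,n\}}\delta_{T'}2^{|T'|-1}-\sum_{T\subsetneq T'}\delta_{T'}2^{|T'|-1-|T|}$, $l_T=h_T-\delta_T$. Then the shifted values $\overline{h}_T=h_T-1$, $\overline{l}_T=l_T-1$ (with $\overline{h}_\emptyset=\overline{l}_\emptyset=0$) satisfy, for every nonempty proper subset $S$ of $\{1,\dots,n\}$, $\sum_{S\subseteq T,\ |T|\equiv|S|\bmod 2}\overline{h}_T \le \sum_{S\subseteq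 T,\ |T|\not\equiv|S|\bmod 2}\overline{l}_T$. -/
open Finset

def sig (u : ℕ) : ℤ := ∑ j ∈ Finset.range (u+1), (u.choose j : ℤ) * 2^(j-1)

lemma two_sig (u : ℕ) : 2 * sig u = 3^u + 1 := by
  have h3 : (3:ℤ)^u = ∑ k ∈ Finset.range (u+1), (2:ℤ)^k * (u.choose k : ℤ) := by
    have h := add_pow (2:ℤ) 1 u
    norm_num at h
    exact h
  rw [sig, Finset.mul_sum, h3, Finset.sum_range_succ' _ u, Finset.sum_range_succ' (fun k => (2:ℤ)^k * (u.choose k : ℤ)) u]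
  simp only [Nat.add_sub_cancel, Nat.zero_sub, pow_zero, Nat.choose_zero_right, Nat.cast_one]
  rw [Finset.sum_congr rfl (fun i _ => by ring_nf : ∀ i ∈ Finset.range u, 2 * ((u.choose (i+1) : ℤ) * 2^i) = 2^(i+1) * (u.choose (i+1):ℤ))]
  ring

lemma K1 (m : ℕ) (hm : 1 ≤ m) :
    ∑ j ∈ Finset.range (m+1), (m.choose j : ℤ) * (-1)^j = 0 := by
  have h := Int.alternating_sum_range_choose_of_ne (n := m) (by omega)
  rw [← h]
  exact Finset.sum_congr rfl fun j _ => by ring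

lemma K2 (m : ℕ) : ∑ j ∈ Finset.range (m+1), (m.choose j : ℤ) * ((-1)^j * 3^(m-j)) = 2^m := by
  have h := add_pow (-1 : ℤ) 3 m
  norm_num at h
  exact (Finset.sum_congr rfl fun j _ => by ring).trans h.symm

lemma K2' (m : ℕ) : ∑ j ∈ Finset.range (m+1), (m.choose j : ℤ) * ((-1)^j * 2^(m-j)) = 1 := by
  have h := add_pow (-1 : ℤ) 2 m
  norm_num at h
  exact (Finset.sum_congr rfl fun j _ => by ring).trans h.symm

lemma K3 (m : ℕ) (hm : 1 ≤ m) :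
    ∑ j ∈ Finset.range (m+1), (m.choose j : ℤ) * ((-1)^j * sig (m-j)) = 2^(m-1) := by
  have h2 : (2:ℤ) * (∑ j ∈ Finset.range (m+1), (m.choose j : ℤ) * ((-1)^j * sig (m-j)))
      = 2 * 2^(m-1) := by
    rw [Finset.mul_sum]
    have : ∀ j ∈ Finset.range (m+1), 2 * ((m.choose j : ℤ) * ((-1)^j * sig (m-j)))
        = (m.choose j : ℤ) * ((-1)^j * 3^(m-j)) + (m.choose j : ℤ) * (-1)^j := by
      intro j _
      have h1 : 2 * ((m.choose j : ℤ) * ((-1)^j * sig (m-j)))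
          = (m.choose j : ℤ) * ((-1)^j * (2 * sig (m-j))) := by ring
      rw [h1, two_sig]; ring
    rw [Finset.sum_congr rfl this, Finset.sum_add_distrib, K2, K1 m hm]
    have : (2:ℤ) * 2^(m-1) = 2^m := by
      rw [mul_comm, ← pow_succ]
      congr 1; omega
    rw [this]; ring
  exact mul_left_cancel₀ two_ne_zero h2

lemma neg_one_pow_ite (j : ℕ) : (-1:ℤ)^j = if j % 2 = 0 then 1 else -1 := by
  rcases Nat.even_or_odd j with he | ho
  · rw [he.neg_one_pow, if_pos (Nat.even_iff.mp he)]
  · have h1 := Nat.odd_iff.mp ho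
    rw [ho.neg_one_pow, if_neg (by omega)]

lemma K4 (m : ℕ) (hm : 1 ≤ m) :
    ∑ j ∈ Finset.range (m+1), (m.choose j : ℤ) * ((-1)^j * 2^(m-j-1))
      = if m % 2 = 0 then 1 else 0 := by
  have h2 : (2:ℤ) * (∑ j ∈ Finset.range (m+1), (m.choose j : ℤ) * ((-1)^j * 2^(m-j-1)))
      = 2 * (if m % 2 = 0 then 1 else 0) := by
    rw [Finset.mul_sum, Finset.sum_range_succ]
    have hpt : ∀ j ∈ Finset.range m, 2 * ((m.choose j : ℤ) * ((-1)^j * 2^(m-j-1)))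
        = (m.choose j : ℤ) * ((-1)^j * 2^(m-j)) := by
      intro j hj
      rw [Finset.mem_range] at hj
      have : (2:ℤ)^(m-j) = 2^(m-j-1) * 2 := by
        rw [← pow_succ]; congr 1; omega
      rw [this]; ring
    rw [Finset.sum_congr rfl hpt]
    have hfull := K2' m
    rw [Finset.sum_range_succ] at hfull
    simp only [Nat.sub_self, Nat.zero_sub, pow_zero, Nat.choose_self, Nat.cast_one, mul_one] at hfull ⊢
    rw [neg_one_pow_ite m] at *
    rcases Nat.even_or_odd m with he | ho
    · have h0 : m % 2 = 0 := Nat.even_iff.mp he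
      simp only [h0, if_true] at hfull ⊢; linarith
    · have h1 : m % 2 = 1 := Nat.odd_iff.mp ho
      simp only [h1, Nat.one_ne_zero, if_false] at hfull ⊢; linarith
  exact mul_left_cancel₀ two_ne_zero h2

lemma K5 (m : ℕ) (hm : 1 ≤ m) :
    ∑ j ∈ Finset.range (m+1), (m.choose j : ℤ) * (if j % 2 = 0 then 1 else 0) = 2^(m-1) := by
  have h2 : (2:ℤ) * (∑ j ∈ Finset.range (m+1), (m.choose j : ℤ) * (if j % 2 = 0 then (1:ℤ) else 0))
      = 2 * 2^(m-1) := by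
    rw [Finset.mul_sum]
    have hpt : ∀ j ∈ Finset.range (m+1), 2 * ((m.choose j : ℤ) * (if j % 2 = 0 then (1:ℤ) else 0))
        = (m.choose j : ℤ) + (m.choose j : ℤ) * (-1)^j := by
      intro j _
      rw [neg_one_pow_ite j]
      split <;> ring
    rw [Finset.sum_congr rfl hpt, Finset.sum_add_distrib, K1 m hm]
    have hch : ∑ j ∈ Finset.range (m+1), (m.choose j : ℤ) = 2^m := by
      have := Nat.sum_range_choose m
      exact_mod_cast congrArg (Nat.cast : ℕ → ℤ) this
    rw [hch]
    have : (2:ℤ) * 2^(m-1) = 2^m := by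
      rw [mul_comm, ← pow_succ]; congr 1; omega
    rw [this]; ring
  exact mul_left_cancel₀ two_ne_zero h2


lemma key_ident (a : ℤ) (m : ℕ) (hm : 1 ≤ m) :
    (∑ j ∈ Finset.range (m+1), (m.choose j : ℤ) *
        (if j % 2 = 0 then a - sig (m - j) + 2^(m - j - 1) else 0))
      + ((∑ j ∈ Finset.range (m+1), (m.choose j : ℤ) * (if j % 2 = 0 then 1 else 0))
          - (if m % 2 = 0 then (1:ℤ) else 0))
      = ∑ j ∈ Finset.range (m+1), (m.choose j : ℤ) *
          (if ¬(j % 2 = 0) then a - sig (m - j) + 2^(m - j - 1) else 0) := by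
  have hsplit :
      (∑ j ∈ Finset.range (m+1), (m.choose j : ℤ) *
          (if ¬(j % 2 = 0) then a - sig (m - j) + 2^(m - j - 1) else 0))
        - (∑ j ∈ Finset.range (m+1), (m.choose j : ℤ) *
          (if j % 2 = 0 then a - sig (m - j) + 2^(m - j - 1) else 0))
      = (∑ j ∈ Finset.range (m+1), (m.choose j : ℤ) * ((-1)^j * sig (m-j)))
        - a * (∑ j ∈ Finset.range (m+1), (m.choose j : ℤ) * (-1)^j)
        - (∑ j ∈ Finset.range (m+1), (m.choose j : ℤ) * ((-1)^j * 2^(m-j-1))) := by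
    rw [← Finset.sum_sub_distrib, Finset.mul_sum, ← Finset.sum_sub_distrib,
      ← Finset.sum_sub_distrib]
    apply Finset.sum_congr rfl
    intro j _
    rw [neg_one_pow_ite j]
    by_cases hj : j % 2 = 0 <;> simp [hj] <;> ring
  rw [K1 m hm, K3 m hm, K4 m hm] at hsplit
  rw [K5 m hm]
  linarith [hsplit]

lemma sum_superset_reindex {n : ℕ} (S : Finset (Fin n)) (f : Finset (Fin n) → ℤ) :
    ∑ T ∈ univ.filter (fun T => S ⊆ T), f T = ∑ X ∈ Sᶜ.powerset, f (S ∪ X) := by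
  apply Finset.sum_nbij' (i := fun T => T \ S) (j := fun X => S ∪ X)
  · intro T hT
    rw [mem_powerset]
    intro x hx
    rw [mem_sdiff] at hx
    exact mem_compl.2 hx.2
  · intro X _
    simp
  · intro T hT
    rw [mem_filter] at hT
    exact union_sdiff_of_subset hT.2
  · intro X hX
    rw [mem_powerset] at hX
    exact union_sdiff_cancel_left (disjoint_compl_right.mono_right hX)
  · intro T hT
    rw [mem_filter] at hT
    rw [union_sdiff_of_subset hT.2]

lemma B_eq {n : ℕ} (δ : Finset (Fin n) → ℤ)
    (hδ1 : ∀ T : Finset (Fin n), T.Nonempty → T ≠ univ → δ T = 1)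
    (hδ2 : δ univ = 0) (T : Finset (Fin n)) (hT : T.Nonempty) :
    ∑ T' ∈ univ.filter (fun T' => T ⊂ T'), δ T' * 2^(T'.card - 1 - T.card)
      = sig (Tᶜ.card) - 2^(Tᶜ.card - 1) - δ T := by
  have hins : univ.filter (fun T' : Finset (Fin n) => T ⊆ T')
      = insert T (univ.filter (fun T' => T ⊂ T')) := by
    ext T'
    simp only [mem_insert, mem_filter, mem_univ, true_and, Finset.ssubset_iff_subset_ne]
    constructor
    · intro h
      by_cases he : T' = T
      · exact Or.inl he
      · exact Or.inr ⟨h, fun e => he e.symm⟩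
    · rintro (rfl | ⟨h, _⟩)
      · exact Finset.Subset.refl _
      · exact h
  have hnotmem : T ∉ univ.filter (fun T' : Finset (Fin n) => T ⊂ T') := by
    simp only [mem_filter, mem_univ, true_and]
    exact fun h => h.2 h.1
  have hsum := sum_superset_reindex T (fun T' => δ T' * 2^(T'.card - 1 - T.card))
  rw [hins, Finset.sum_insert hnotmem] at hsum
  -- pointwise rewrite of RHS of hsum
  have hpt : ∀ Y ∈ Tᶜ.powerset,
      δ (T ∪ Y) * 2^((T ∪ Y).card - 1 - T.card)
        = (2:ℤ)^(Y.card - 1) - (if Y = Tᶜ then (2:ℤ)^(Y.card - 1) else 0) := by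
    intro Y hY
    rw [mem_powerset] at hY
    have hd : Disjoint T Y := disjoint_compl_right.mono_right hY
    have hcard : (T ∪ Y).card = T.card + Y.card := card_union_of_disjoint hd
    have hexp : (T ∪ Y).card - 1 - T.card = Y.card - 1 := by omega
    rw [hexp]
    by_cases hYc : Y = Tᶜ
    · subst hYc
      rw [union_compl, hδ2, if_pos rfl]
      ring
    · have hne : T ∪ Y ≠ univ := by
        intro he
        apply hYc
        apply Finset.Subset.antisymm hY
        intro x hx
        have hxu : x ∈ T ∪ Y := he ▸ mem_univ x
        rcases mem_union.1 hxu with h1 | h1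
        · exact absurd h1 (mem_compl.1 hx)
        · exact h1
      rw [hδ1 _ (hT.mono subset_union_left) hne, if_neg hYc]
      ring
  rw [Finset.sum_congr rfl hpt, Finset.sum_sub_distrib] at hsum
  have hsig : ∑ Y ∈ Tᶜ.powerset, (2:ℤ)^(Y.card - 1) = sig (Tᶜ.card) := by
    rw [Finset.sum_powerset_apply_card (fun c => (2:ℤ)^(c-1)), sig]
    exact Finset.sum_congr rfl fun j _ => by rw [nsmul_eq_mul]
  have hite : ∑ Y ∈ Tᶜ.powerset, (if Y = Tᶜ then (2:ℤ)^(Y.card - 1) else 0)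
      = (2:ℤ)^(Tᶜ.card - 1) := by
    rw [Finset.sum_ite_eq' Tᶜ.powerset Tᶜ (fun Y => (2:ℤ)^(Y.card - 1)),
      if_pos (mem_powerset_self _)]
  rw [hsig, hite] at hsum
  have hTT : δ T * 2^(T.card - 1 - T.card) = δ T := by
    have : T.card - 1 - T.card = 0 := by omega
    rw [this, pow_zero, mul_one]
  rw [hTT] at hsum
  linarith [hsum]


/-- For even `n`, the Droste values shifted down by one still satisfy the
feasibility inequalities for every nonempty proper `S`. -/
theorem shifted_droste_feasible (n : ℕ) (hn : 2 ≤ n) (hev : Even n)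
    (δ h hb lb : Finset (Fin n) → ℤ)
    (hδ1 : ∀ T : Finset (Fin n), T.Nonempty → T ≠ univ → δ T = 1)
    (hδ2 : δ univ = 0)
    (hh : ∀ T : Finset (Fin n), T.Nonempty →
      h T = (∑ T' ∈ univ.filter (fun T' : Finset (Fin n) => T'.Nonempty),
              δ T' * 2 ^ (T'.card - 1)) -
            ∑ T' ∈ univ.filter (fun T' : Finset (Fin n) => T ⊂ T'),
              δ T' * 2 ^ (T'.card - 1 - T.card))
    (hhb : ∀ T : Finset (Fin n), T.Nonempty → hb T = h T - 1)
    (hlb : ∀ T : Finset (Fin n), T.Nonempty → lb T = h T - δ T - 1)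
    (hb0 : hb ∅ = 0) (lb0 : lb ∅ = 0) :
    ∀ S : Finset (Fin n), S.Nonempty → S ⊂ univ →
      ∑ T ∈ univ.filter (fun T : Finset (Fin n) =>
          S ⊆ T ∧ T.card % 2 = S.card % 2), hb T ≤
      ∑ T ∈ univ.filter (fun T : Finset (Fin n) =>
          S ⊆ T ∧ T.card % 2 ≠ S.card % 2), lb T := by
  intro S hS hSu
  set A : ℤ := ∑ T' ∈ univ.filter (fun T' : Finset (Fin n) => T'.Nonempty),
      δ T' * 2 ^ (T'.card - 1) with hA
  set M : Finset (Fin n) := Sᶜ with hMdef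
  have hMne : M ≠ ∅ := by
    intro hE
    have : S = univ := by
      rwa [← compl_eq_empty_iff]
    exact hSu.ne this
  have hm1 : 1 ≤ M.card := card_pos.2 (nonempty_iff_ne_empty.2 hMne)
  -- facts about X ⊆ M
  have hval : ∀ X ∈ M.powerset,
      hb (S ∪ X) = (A - 1 - sig (M.card - X.card) + 2^(M.card - X.card - 1))
        + δ (S ∪ X) ∧
      lb (S ∪ X) = (A - 1 - sig (M.card - X.card) + 2^(M.card - X.card - 1)) ∧
      (S ∪ X).card = S.card + X.card ∧
      δ (S ∪ X) = (if X = M then 0 else 1) := by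
    intro X hX
    rw [mem_powerset] at hX
    have hd : Disjoint S X := disjoint_compl_right.mono_right hX
    have hcard : (S ∪ X).card = S.card + X.card := card_union_of_disjoint hd
    have hne : (S ∪ X).Nonempty := hS.mono subset_union_left
    have hcompl : (S ∪ X)ᶜ = M \ X := by
      rw [compl_union, sdiff_eq]
      rfl
    have hucard : (S ∪ X)ᶜ.card = M.card - X.card := by
      rw [hcompl, card_sdiff_of_subset hX]
    have hδX : δ (S ∪ X) = (if X = M then 0 else 1) := by
      by_cases hXM : X = M
      · subst hXM
        rw [if_pos rfl, hMdef, union_compl, hδ2]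
      · rw [if_neg hXM]
        apply hδ1 _ hne
        intro he
        apply hXM
        apply Finset.Subset.antisymm hX
        intro x hx
        have hxu : x ∈ S ∪ X := he ▸ mem_univ x
        rcases mem_union.1 hxu with h1 | h1
        · exact absurd h1 (mem_compl.1 hx)
        · exact h1
    have hB := B_eq δ hδ1 hδ2 (S ∪ X) hne
    rw [hucard] at hB
    have hhX := hh (S ∪ X) hne
    rw [hB] at hhX
    refine ⟨?_, ?_, hcard, hδX⟩
    · rw [hhb _ hne, hhX]; ring
    · rw [hlb _ hne, hhX]; ring
  -- rewrite both sides
  have hsplit : ∀ (p : Finset (Fin n) → Prop) [DecidablePred p] (f : Finset (Fin n) → ℤ),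
      ∑ T ∈ univ.filter (fun T => S ⊆ T ∧ p T), f T
        = ∑ X ∈ M.powerset, (if p (S ∪ X) then f (S ∪ X) else 0) := by
    intro p _ f
    have h1 : univ.filter (fun T : Finset (Fin n) => S ⊆ T ∧ p T)
        = (univ.filter (fun T => S ⊆ T)).filter p := by rw [filter_filter]
    rw [h1, Finset.sum_filter]
    exact sum_superset_reindex S _
  rw [hsplit (fun T => T.card % 2 = S.card % 2) hb,
    hsplit (fun T => T.card % 2 ≠ S.card % 2) lb]
  have hL : ∑ X ∈ M.powerset,
      (if (S ∪ X).card % 2 = S.card % 2 then hb (S ∪ X) else 0)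
      = (∑ X ∈ M.powerset, (if X.card % 2 = 0 then
          A - 1 - sig (M.card - X.card) + 2^(M.card - X.card - 1) else 0))
        + ((∑ X ∈ M.powerset, (if X.card % 2 = 0 then (1:ℤ) else 0))
          - (if M.card % 2 = 0 then (1:ℤ) else 0)) := by
    have hpt : ∀ X ∈ M.powerset,
        (if (S ∪ X).card % 2 = S.card % 2 then hb (S ∪ X) else 0)
        = (if X.card % 2 = 0 then
            A - 1 - sig (M.card - X.card) + 2^(M.card - X.card - 1) else 0)
          + ((if X.card % 2 = 0 then (1:ℤ) else 0)
            - (if X = M then (if M.card % 2 = 0 then (1:ℤ) else 0) else 0)) := by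
      intro X hX
      obtain ⟨h1, _, h3, h4⟩ := hval X hX
      have hiff : ((S ∪ X).card % 2 = S.card % 2) ↔ (X.card % 2 = 0) := by
        rw [h3]; constructor <;> omega
      rw [if_congr hiff rfl rfl, h1, h4]
      by_cases hXM : X = M
      · subst hXM
        have hXcard : (M.card % 2 = 0) = (M.card % 2 = 0) := rfl
        by_cases hp : M.card % 2 = 0 <;> simp [hp]
      · by_cases hp : X.card % 2 = 0 <;> simp [hXM, hp]
    rw [Finset.sum_congr rfl hpt, Finset.sum_add_distrib, Finset.sum_sub_distrib]
    congr 1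
    congr 1
    rw [Finset.sum_ite_eq' M.powerset M
      (fun _ => (if M.card % 2 = 0 then (1:ℤ) else 0)),
      if_pos (mem_powerset_self _)]
  have hR : ∑ X ∈ M.powerset,
      (if (S ∪ X).card % 2 ≠ S.card % 2 then lb (S ∪ X) else 0)
      = ∑ X ∈ M.powerset, (if ¬(X.card % 2 = 0) then
          A - 1 - sig (M.card - X.card) + 2^(M.card - X.card - 1) else 0) := by
    apply Finset.sum_congr rfl
    intro X hX
    obtain ⟨_, h2, h3, _⟩ := hval X hX
    have hiff : ((S ∪ X).card % 2 ≠ S.card % 2) ↔ ¬(X.card % 2 = 0) := by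
      rw [h3]; constructor <;> omega
    rw [if_congr hiff rfl rfl, h2]
  rw [hL, hR]
  apply le_of_eq
  rw [Finset.sum_powerset_apply_card
      (fun c => if c % 2 = 0 then A - 1 - sig (M.card - c) + 2^(M.card - c - 1) else 0),
    Finset.sum_powerset_apply_card (fun c => if c % 2 = 0 then (1:ℤ) else 0),
    Finset.sum_powerset_apply_card
      (fun c => if ¬(c % 2 = 0) then A - 1 - sig (M.card - c) + 2^(M.card - c - 1) else 0)]
  simp only [nsmul_eq_mul]
  exact key_ident (A - 1) M.card hm1
end

section
/- Let $n\ge 2$ be even and let $\overline{h}_T,\overline{l}_T$ (nonempty $T\subseteq\{1,\dots,n\}$, $\overline{l}_T=\overline{h}_T-1$ for $T\neq\{1,\dots,n\}$, $\overline{l}_{\{1,\dots,n\}}=\overline{h}_{\{1,\dots,n\}}$) be as in the shifted Droste values. Define $r_T=\overline{h}_T$ for $|T|$ even, $r_T=\overline{l}_T$ for $|T|$ odd, $T\neq\{1,\dots,n\}$, and $r_{\{1,\dots,n\}}=\overline{h}_{\{1,\dots,n\}}-1$ if $n$ is even (else as given). Then the explicit solution $x_S=\sum_{\{1,\dots,n\}\setminus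 S\subseteq T} (-1)^{|T|+|S|+n+1} r_T$ satisfies $x_{\{1,\dots,n\}}=0$, $x_S=1$ for $|S|$ even with $S\neq\{1,\dots,n\}$, and $x_S\ge 0$ for $|S|$ odd. -/
/-!
Doubling clears the halved powers of two in the Droste formula. Its first sum is its second
one at `T = ∅`, and reindexing supersets of `T` by their complements, which are the subsets of
`Tᶜ`, gives `2 h_T = 3^N - 2^N - 3^m + 2^m - [T = univ]` with `m = |Tᶜ|`. Hence `2 r_T` is a
combination of `a ^ m` for `a ∈ {1, 3, 2, -1}`, corrected at `T = univ` and `T = ∅`. Over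
`W ⊆ S` the signed sum of `(-1)^(|W| + |S|) a^|W|` is `(a - 1)^|S|`, so
`2 x_S = 2^s - (-2)^s - 1 + 3 (-1)^s - 2 [S = univ]`: this is `0` at `univ`, `2` for even `s`
and `2^(s+1) - 4 ≥ 0` for odd `s`.
-/
open Finset

theorem sum_powerset_neg_one_pow_mul_pow {ι R : Type*} [CommRing R] (S : Finset ι) (a : R) :
    ∑ W ∈ S.powerset, (-1) ^ (W.card + S.card) * a ^ W.card = (a - 1) ^ S.card := by
  have h := sum_pow_mul_eq_add_pow (-a) 1 S
  calc ∑ W ∈ S.powerset, (-1) ^ (W.card + S.card) * a ^ W.card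
      = (-1) ^ S.card * ∑ W ∈ S.powerset, (-a) ^ W.card * 1 ^ (S.card - W.card) := by
        rw [mul_sum]; refine sum_congr rfl fun W _ => ?_; rw [neg_pow]; ring
    _ = (a - 1) ^ S.card := by rw [h, ← mul_pow]; ring

section
variable {α : Type*} [Fintype α] [DecidableEq α]

theorem sum_filter_superset_eq_sum_powerset_compl {M : Type*} [AddCommMonoid M]
    (A : Finset α) (F : Finset α → M) :
    ∑ T ∈ univ.filter (A ⊆ ·), F T = ∑ V ∈ Aᶜ.powerset, F Vᶜ :=
  sum_nbij' compl compl (by simp) (by simp [subset_compl_comm])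
    (by simp) (by simp) (by simp)

theorem sum_filter_ssuperset_add {M : Type*} [AddCommMonoid M]
    (A : Finset α) (F : Finset α → M) :
    ∑ T ∈ univ.filter (A ⊂ ·), F T + F A = ∑ T ∈ univ.filter (A ⊆ ·), F T := by
  have hA : A ∈ univ.filter (A ⊆ ·) := by simp
  rw [← sum_erase_add _ _ hA]
  congr 2
  ext T
  simp [ssubset_iff_subset_ne, and_comm, eq_comm]

theorem sum_filter_superset_pow_card_sdiff {R : Type*} [CommSemiring R] (a : R)
    (A : Finset α) :
    ∑ T ∈ univ.filter (A ⊆ ·), a ^ (T \ A).card = (1 + a) ^ Aᶜ.card := by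
  rw [sum_filter_superset_eq_sum_powerset_compl, ← sum_pow_mul_eq_add_pow]
  refine sum_congr rfl fun V hV => ?_
  have hVA : Vᶜ \ A = Aᶜ \ V := by simp [sdiff_eq, inf_comm]
  rw [one_pow, one_mul, hVA, card_sdiff_of_subset (mem_powerset.mp hV)]

theorem two_mul_droste_sum (δ : Finset α → ℤ)
    (hδ1 : ∀ T : Finset α, T.Nonempty → T ≠ univ → δ T = 1) (hδ2 : δ univ = 0)
    (T : Finset α) :
    2 * ∑ T' ∈ univ.filter (T ⊂ ·), δ T' * 2 ^ (T'.card - 1 - T.card) =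
      3 ^ Tᶜ.card - 2 ^ Tᶜ.card - if T = univ then 0 else 1 := by
  by_cases hT : T = univ
  · subst hT
    rw [filter_false_of_mem fun T' _ => (not_top_lt : ¬ univ ⊂ T')]
    simp
  have hterm : ∀ T' ∈ univ.filter (T ⊂ ·), 2 * (δ T' * 2 ^ (T'.card - 1 - T.card)) =
      2 ^ (T' \ T).card - if T' = univ then 2 ^ Tᶜ.card else 0 := by
    intro T' hT'
    replace hT' : T ⊂ T' := (mem_filter.mp hT').2
    have hcard : (T' \ T).card = T'.card - 1 - T.card + 1 := by
      have := card_lt_card hT'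
      rw [card_sdiff_of_subset hT'.subset]; omega
    rw [hcard]
    split_ifs with hT'univ
    · subst hT'univ; rw [hδ2, ← hcard, ← compl_eq_univ_sdiff]; ring
    · rw [hδ1 T' (nonempty_iff_ne_empty.2 (ne_bot_of_gt hT')) hT'univ]; ring
  have hsub := sum_filter_ssuperset_add T (fun T' => (2 : ℤ) ^ (T' \ T).card)
  rw [sum_filter_superset_pow_card_sdiff, sdiff_self, bot_eq_empty, card_empty,
    pow_zero] at hsub
  have huniv : univ ∈ univ.filter (T ⊂ ·) := by simpa [ssubset_univ_iff] using hT
  rw [mul_sum, sum_congr rfl hterm, sum_sub_distrib, sum_ite_eq' _ _ _, if_pos huniv, if_neg hT]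
  linear_combination hsub

theorem two_mul_droste_value (δ h : Finset α → ℤ)
    (hδ1 : ∀ T : Finset α, T.Nonempty → T ≠ univ → δ T = 1) (hδ2 : δ univ = 0)
    (hh : ∀ T : Finset α, T.Nonempty →
      h T = (∑ T' ∈ univ.filter (fun T' : Finset α => T'.Nonempty),
              δ T' * 2 ^ (T'.card - 1)) -
            ∑ T' ∈ univ.filter (fun T' : Finset α => T ⊂ T'),
              δ T' * 2 ^ (T'.card - 1 - T.card))
    {T : Finset α} (hT : T.Nonempty) :
    2 * h T = 3 ^ Fintype.card α - 2 ^ Fintype.card α - 3 ^ Tᶜ.card + 2 ^ Tᶜ.card -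
      if T = univ then 1 else 0 := by
  have h0 := two_mul_droste_sum δ hδ1 hδ2 ∅
  simp only [empty_ssubset, card_empty, Nat.sub_zero, compl_empty, card_univ] at h0
  rw [hh T hT, mul_sub, h0, two_mul_droste_sum δ hδ1 hδ2 T,
    if_neg (univ_nonempty_iff.mpr hT.to_type).ne_empty.symm]
  split_ifs <;> ring

theorem neg_one_pow_card_compl {R : Type*} [Monoid R] [HasDistribNeg R]
    (hα : Even (Fintype.card α)) (T : Finset α) : (-1 : R) ^ Tᶜ.card = (-1) ^ T.card := by
  refine neg_one_pow_congr ?_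
  rw [← Nat.even_add, card_compl_add_card]
  exact hα

theorem two_mul_adjusted_value [Nonempty α] (δ h hb lb r : Finset α → ℤ)
    (hα : Even (Fintype.card α))
    (hδ1 : ∀ T : Finset α, T.Nonempty → T ≠ univ → δ T = 1) (hδ2 : δ univ = 0)
    (hh : ∀ T : Finset α, T.Nonempty →
      h T = (∑ T' ∈ univ.filter (fun T' : Finset α => T'.Nonempty),
              δ T' * 2 ^ (T'.card - 1)) -
            ∑ T' ∈ univ.filter (fun T' : Finset α => T ⊂ T'),
              δ T' * 2 ^ (T'.card - 1 - T.card))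
    (hhb : ∀ T : Finset α, T.Nonempty → hb T = h T - 1)
    (hlb : ∀ T : Finset α, T.Nonempty → lb T = h T - δ T - 1)
    (hb0 : hb ∅ = 0)
    (hr : ∀ T : Finset α, T ≠ univ → r T = if Even T.card then hb T else lb T)
    (hruniv : r univ = hb univ - 1) (T : Finset α) :
    2 * r T = 3 ^ Fintype.card α - 2 ^ Fintype.card α - 3 - 3 ^ Tᶜ.card + 2 ^ Tᶜ.card +
      (-1) ^ Tᶜ.card - (if T = univ then 3 else 0) + if T = ∅ then 2 else 0 := by
  have hne : (∅ : Finset α) ≠ univ := univ_nonempty.ne_empty.symm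
  rcases T.eq_empty_or_nonempty with rfl | hT
  · rw [hr ∅ hne, if_pos (by simp), hb0, if_neg hne, if_pos rfl, compl_empty, card_univ,
      hα.neg_one_pow]
    ring
  have h2h := two_mul_droste_value δ h hδ1 hδ2 hh hT
  by_cases hTu : T = univ
  · subst hTu
    rw [hruniv, hhb _ hT]
    simp only [if_true, compl_univ, card_empty, if_neg hne.symm] at h2h ⊢
    linarith
  rw [hr T hTu, neg_one_pow_card_compl hα, if_neg hTu, if_neg hT.ne_empty]
  rw [if_neg hTu] at h2h
  split_ifs with hTe
  · rw [hhb T hT, hTe.neg_one_pow]; linarith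
  · rw [hlb T hT, hδ1 T hT hTu, (Nat.not_even_iff_odd.mp hTe).neg_one_pow]; linarith

theorem two_mul_solution_eq (c : ℤ) (r x : Finset α → ℤ)
    (h2r : ∀ T : Finset α, 2 * r T = c - 3 ^ Tᶜ.card + 2 ^ Tᶜ.card + (-1) ^ Tᶜ.card -
      (if T = univ then 3 else 0) + if T = ∅ then 2 else 0)
    (hx : ∀ S : Finset α, x S = ∑ T ∈ univ.filter (fun T : Finset α => univ \ S ⊆ T),
      (-1 : ℤ) ^ (T.card + S.card + Fintype.card α + 1) * r T)
    {S : Finset α} (hS : S.Nonempty) :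
    2 * x S = 2 ^ S.card - (-2) ^ S.card - 1 + 3 * (-1) ^ S.card - if S = univ then 2 else 0 := by
  have hterm : ∀ V ∈ S.powerset,
      2 * ((-1) ^ (Vᶜ.card + S.card + Fintype.card α + 1) * r Vᶜ) =
        -(c * ((-1) ^ (V.card + S.card) * 1 ^ V.card) - (-1) ^ (V.card + S.card) * 3 ^ V.card +
          (-1) ^ (V.card + S.card) * 2 ^ V.card + (-1) ^ (V.card + S.card) * (-1) ^ V.card -
          3 * ((-1) ^ (V.card + S.card) * 0 ^ V.card) +
          2 * if V = univ then (-1) ^ (V.card + S.card) else 0) := by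
    intro V _
    have hsign : (-1 : ℤ) ^ (Vᶜ.card + S.card + Fintype.card α + 1) =
        -(-1) ^ (V.card + S.card) := by
      rw [pow_succ, mul_neg_one, neg_inj]
      refine neg_one_pow_congr ?_
      rw [← card_compl_add_card V]
      simp only [parity_simps]; tauto
    -- `0 ^ V.card` is the indicator of `V = ∅`, so it is one more power `a ^ V.card`
    have hzero : (0 : ℤ) ^ V.card = if V = ∅ then 1 else 0 := by
      simp [zero_pow_eq, card_eq_zero]
    rw [hsign, mul_left_comm, h2r, compl_compl, hzero]
    simp only [compl_eq_univ_iff, compl_eq_empty_iff]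
    split_ifs <;> ring
  rw [hx, ← compl_eq_univ_sdiff, sum_filter_superset_eq_sum_powerset_compl, compl_compl, mul_sum,
    sum_congr rfl hterm]
  simp only [sum_neg_distrib, sum_add_distrib, sum_sub_distrib, ← mul_sum,
    sum_powerset_neg_one_pow_mul_pow, sum_ite_eq', mem_powerset, univ_subset_iff]
  rw [sub_self, zero_pow hS.card_pos.ne']
  split_ifs with hSu
  · rw [hSu, ← two_mul, pow_mul]; ring
  · ring
end

theorem adjusted_solution_nonneg_general (n : ℕ) (hn : 2 ≤ n) (hev : Even n)
    (δ h hb lb r x : Finset (Fin n) → ℤ)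
    (hδ1 : ∀ T : Finset (Fin n), T.Nonempty → T ≠ univ → δ T = 1)
    (hδ2 : δ univ = 0)
    (hh : ∀ T : Finset (Fin n), T.Nonempty →
      h T = (∑ T' ∈ univ.filter (fun T' : Finset (Fin n) => T'.Nonempty),
              δ T' * 2 ^ (T'.card - 1)) -
            ∑ T' ∈ univ.filter (fun T' : Finset (Fin n) => T ⊂ T'),
              δ T' * 2 ^ (T'.card - 1 - T.card))
    (hhb : ∀ T : Finset (Fin n), T.Nonempty → hb T = h T - 1)
    (hlb : ∀ T : Finset (Fin n), T.Nonempty → lb T = h T - δ T - 1)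
    (hb0 : hb ∅ = 0)
    (hr : ∀ T : Finset (Fin n), T ≠ univ →
      r T = if Even T.card then hb T else lb T)
    (hruniv : r univ = hb univ - 1)
    (hx : ∀ S : Finset (Fin n),
      x S = ∑ T ∈ univ.filter (fun T : Finset (Fin n) => univ \ S ⊆ T),
        (-1 : ℤ) ^ (T.card + S.card + n + 1) * r T) :
    x univ = 0 ∧
    (∀ S : Finset (Fin n), S.Nonempty → S ≠ univ → Even S.card → x S = 1) ∧
    (∀ S : Finset (Fin n), S.Nonempty → ¬ Even S.card → 0 ≤ x S) := by
  have : Nonempty (Fin n) := ⟨⟨0, by omega⟩⟩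
  have hcard : Even (Fintype.card (Fin n)) := by rwa [Fintype.card_fin]
  have h2x : ∀ S : Finset (Fin n), S.Nonempty → 2 * x S =
      2 ^ S.card - (-2) ^ S.card - 1 + 3 * (-1) ^ S.card - if S = univ then 2 else 0 :=
    fun S hS => two_mul_solution_eq _ r x
      (two_mul_adjusted_value δ h hb lb r hcard hδ1 hδ2 hh hhb hlb hb0 hr hruniv)
      (by simpa only [Fintype.card_fin] using hx) hS
  refine ⟨?_, fun S hS hSu hSe => ?_, fun S hS hSo => ?_⟩
  · have h2 := h2x univ univ_nonempty
    rw [card_univ, Fintype.card_fin, hev.neg_one_pow, hev.neg_pow, if_pos rfl] at h2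
    linarith
  · have h2 := h2x S hS
    rw [hSe.neg_one_pow, hSe.neg_pow, if_neg hSu] at h2
    linarith
  · have hSu : S ≠ univ := by
      rintro rfl
      exact hSo (by rwa [card_univ])
    have hSo' := Nat.not_even_iff_odd.mp hSo
    have h2 := h2x S hS
    rw [hSo'.neg_one_pow, hSo'.neg_pow, if_neg hSu] at h2
    have h2le : (2 : ℤ) ≤ 2 ^ S.card := le_self_pow₀ one_le_two hS.card_pos.ne'
    linarith

/-- For even `n`, after adjusting `r_{{1,…,n}}` to `h̄_{{1,…,n}} - 1`, the
explicit solution of `M x = r` satisfies `x_{{1,…,n}} = 0`, `x_S = 1` for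
`|S|` even (`S ≠ {1,…,n}`), and `x_S ≥ 0` for `|S|` odd. -/
theorem adjusted_solution_nonneg (n : ℕ) (hn : 2 ≤ n) (hev : Even n)
    (δ h hb lb r x : Finset (Fin n) → ℤ)
    (hδ1 : ∀ T : Finset (Fin n), T.Nonempty → T ≠ univ → δ T = 1)
    (hδ2 : δ univ = 0)
    (hh : ∀ T : Finset (Fin n), T.Nonempty →
      h T = (∑ T' ∈ univ.filter (fun T' : Finset (Fin n) => T'.Nonempty),
              δ T' * 2 ^ (T'.card - 1)) -
            ∑ T' ∈ univ.filter (fun T' : Finset (Fin n) => T ⊂ T'),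
              δ T' * 2 ^ (T'.card - 1 - T.card))
    (hhb : ∀ T : Finset (Fin n), T.Nonempty → hb T = h T - 1)
    (hlb : ∀ T : Finset (Fin n), T.Nonempty → lb T = h T - δ T - 1)
    (hb0 : hb ∅ = 0) (lb0 : lb ∅ = 0)
    (hr : ∀ T : Finset (Fin n), T ≠ univ →
      r T = if Even T.card then hb T else lb T)
    (hruniv : r univ = hb univ - 1)
    (hx : ∀ S : Finset (Fin n),
      x S = ∑ T ∈ univ.filter (fun T : Finset (Fin n) => univ \ S ⊆ T),
        (-1 : ℤ) ^ (T.card + S.card + n + 1) * r T) :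
    x univ = 0 ∧
    (∀ S : Finset (Fin n), S.Nonempty → S ≠ univ → Even S.card → x S = 1) ∧
    (∀ S : Finset (Fin n), S.Nonempty → ¬ Even S.card → 0 ≤ x S) :=
  adjusted_solution_nonneg_general n hn hev δ h hb lb r x hδ1 hδ2 hh hhb hlb hb0 hr hruniv hx
end

section
/- Let $n\ge 1$ be odd. Suppose nonnegative integers $\overline{h}_T\ge\overline{l}_T$ (nonempty $T\subseteq\{1,\dots,n\}$, $\overline{h}_\emptyset=\overline{l}_\emptyset=0$) satisfy $\overline{h}_T-\overline{l}_T\ge 1$ for all nonempty proper $T$, and for every $S\subsetneq\{1,\dots,n\}$ the inequality $\sum_{S\subseteq T,\ |T|\equiv|S|\bmod 2}\overline{h}_T\le\sum_{S\subseteq T,\ |T|\not\equiv|S|\bmod 2}\overline{l}_T$ holds. Let $h_T$ be the Droste values with $\delta_T=1$ for nonempty proper $T$ and $\delta_{\{1,\dots,n\}}=0$. Then $\overline{h}_{\{1,\dots,n\}}\ge h_{\{1,\dots,n\}}$. -/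
open Finset

section aux
variable {α : Type*} [DecidableEq α]

private lemma parity_split (T : Finset α) (hT : T.Nonempty) :
    ((T.powerset.filter (fun S => S.card % 2 = 0)).card : ℤ)
      = ((T.powerset.filter (fun S => ¬ S.card % 2 = 0)).card : ℤ) := by
  have h0 : (∑ m ∈ T.powerset, (-1 : ℤ) ^ m.card) = 0 :=
    Finset.sum_powerset_neg_one_pow_card_of_nonempty hT
  rw [← Finset.sum_filter_add_sum_filter_not T.powerset (fun S => S.card % 2 = 0)] at h0
  have h1 : ∑ m ∈ T.powerset.filter (fun S => S.card % 2 = 0), (-1:ℤ)^m.card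
      = ((T.powerset.filter (fun S => S.card % 2 = 0)).card : ℤ) := by
    rw [Finset.sum_congr rfl fun m hm =>
      Even.neg_one_pow (Nat.even_iff.2 (Finset.mem_filter.1 hm).2)]
    simp
  have h2 : ∑ m ∈ T.powerset.filter (fun S => ¬ S.card % 2 = 0), (-1:ℤ)^m.card
      = -((T.powerset.filter (fun S => ¬ S.card % 2 = 0)).card : ℤ) := by
    rw [Finset.sum_congr rfl fun m hm =>
      Odd.neg_one_pow (Nat.odd_iff.2 (Nat.mod_two_ne_zero.1 (Finset.mem_filter.1 hm).2))]
    simp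
  rw [h1, h2] at h0
  linarith

private lemma count_both (T : Finset α) (hT : T.Nonempty) :
    (T.powerset.filter (fun S => S.card % 2 = 0)).card = 2 ^ (T.card - 1) ∧
    (T.powerset.filter (fun S => ¬ S.card % 2 = 0)).card = 2 ^ (T.card - 1) := by
  have heq : (T.powerset.filter (fun S => S.card % 2 = 0)).card
      = (T.powerset.filter (fun S => ¬ S.card % 2 = 0)).card := by
    exact_mod_cast parity_split T hT
  have hadd : (T.powerset.filter (fun S => S.card % 2 = 0)).card
      + (T.powerset.filter (fun S => ¬ S.card % 2 = 0)).card = 2 ^ T.card := by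
    rw [Finset.card_filter_add_card_filter_not, Finset.card_powerset]
  have hcard : T.card = (T.card - 1) + 1 := by
    have := Finset.card_pos.2 hT; omega
  rw [hcard, pow_succ] at hadd
  omega

private lemma count_same (T : Finset α) (hT : T.Nonempty) :
    (T.powerset.filter (fun S => T.card % 2 = S.card % 2)).card = 2 ^ (T.card - 1) := by
  rcases Nat.mod_two_eq_zero_or_one T.card with h | h
  · rw [Finset.filter_congr (fun S _ => by rw [h] ; omega : ∀ S ∈ T.powerset,
      (T.card % 2 = S.card % 2) ↔ (S.card % 2 = 0))]
    exact (count_both T hT).1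
  · rw [Finset.filter_congr (fun S _ => by rw [h] ; omega : ∀ S ∈ T.powerset,
      (T.card % 2 = S.card % 2) ↔ ¬ (S.card % 2 = 0))]
    exact (count_both T hT).2

private lemma count_diff (T : Finset α) (hT : T.Nonempty) :
    (T.powerset.filter (fun S => T.card % 2 ≠ S.card % 2)).card = 2 ^ (T.card - 1) := by
  rcases Nat.mod_two_eq_zero_or_one T.card with h | h
  · rw [Finset.filter_congr (fun S _ => by rw [h] ; omega : ∀ S ∈ T.powerset,
      (T.card % 2 ≠ S.card % 2) ↔ ¬ (S.card % 2 = 0))]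
    exact (count_both T hT).2
  · rw [Finset.filter_congr (fun S _ => by rw [h] ; omega : ∀ S ∈ T.powerset,
      (T.card % 2 ≠ S.card % 2) ↔ (S.card % 2 = 0))]
    exact (count_both T hT).1

private lemma swap_sum [Fintype α] (A : Finset (Finset α)) (f : Finset α → ℤ)
    (q : Finset α → Finset α → Prop) [∀ S T, Decidable (q S T)] :
    ∑ S ∈ A, ∑ T ∈ univ.filter (fun T => q S T), f T
      = ∑ T ∈ (univ : Finset (Finset α)), ((A.filter (fun S => q S T)).card : ℤ) * f T := by
  simp_rw [Finset.sum_filter]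
  rw [Finset.sum_comm]
  refine Finset.sum_congr rfl fun T _ => ?_
  rw [← Finset.sum_filter, Finset.sum_const, nsmul_eq_mul]

end aux

/-- For odd `n`, Droste's construction for
`𝔖 = 𝒫({1,…,n}) ∖ {∅, {1,…,n}}` is optimal: every feasible choice satisfies
`h̄_{{1,…,n}} ≥ ∑_{∅ ≠ T ⊊ {1,…,n}} 2^{|T|-1}`. -/
theorem droste_optimal_odd (n : ℕ) (hn : 1 ≤ n) (hodd : Odd n)
    (hb lb : Finset (Fin n) → ℤ)
    (hb0 : hb ∅ = 0) (lb0 : lb ∅ = 0)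
    (hl0 : ∀ T : Finset (Fin n), 0 ≤ lb T)
    (hlh : ∀ T : Finset (Fin n), lb T ≤ hb T)
    (hcontrast : ∀ T : Finset (Fin n), T.Nonempty → T ≠ univ → lb T + 1 ≤ hb T)
    (hineq : ∀ S : Finset (Fin n), S ⊂ univ →
      ∑ T ∈ univ.filter (fun T : Finset (Fin n) =>
          S ⊆ T ∧ T.card % 2 = S.card % 2), hb T ≤
      ∑ T ∈ univ.filter (fun T : Finset (Fin n) =>
          S ⊆ T ∧ T.card % 2 ≠ S.card % 2), lb T) :
    hb univ ≥ ∑ T ∈ univ.filter (fun T : Finset (Fin n) => T.Nonempty ∧ T ≠ univ),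
      (2 : ℤ) ^ (T.card - 1) := by
  classical
  set A : Finset (Finset (Fin n)) :=
    (univ : Finset (Finset (Fin n))).filter (fun S => S ⊂ univ) with hA
  have hcardu : (univ : Finset (Fin n)).card = n := by simp
  have huniv_ne : (univ : Finset (Fin n)) ≠ ∅ := by
    intro h
    have := hcardu
    rw [h] at this
    simp at this
    omega
  have huniv_nonempty : (univ : Finset (Fin n)).Nonempty :=
    Finset.nonempty_iff_ne_empty.2 huniv_ne
  -- sum all the inequalities
  have key : ∑ S ∈ A, ∑ T ∈ univ.filter (fun T : Finset (Fin n) =>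
        S ⊆ T ∧ T.card % 2 = S.card % 2), hb T
      ≤ ∑ S ∈ A, ∑ T ∈ univ.filter (fun T : Finset (Fin n) =>
        S ⊆ T ∧ T.card % 2 ≠ S.card % 2), lb T := by
    refine Finset.sum_le_sum fun S hS => hineq S ?_
    exact (Finset.mem_filter.1 hS).2
  rw [swap_sum A hb (fun S T => S ⊆ T ∧ T.card % 2 = S.card % 2),
      swap_sum A lb (fun S T => S ⊆ T ∧ T.card % 2 ≠ S.card % 2)] at key
  -- counts for proper nonempty T
  have hcA : ∀ T : Finset (Fin n), T.Nonempty → T ≠ univ →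
      (A.filter (fun S => S ⊆ T ∧ T.card % 2 = S.card % 2)).card = 2 ^ (T.card - 1) := by
    intro T hT hTu
    have hset : A.filter (fun S => S ⊆ T ∧ T.card % 2 = S.card % 2)
        = T.powerset.filter (fun S => T.card % 2 = S.card % 2) := by
      ext S
      simp only [hA, Finset.mem_filter, Finset.mem_powerset, Finset.mem_filter,
        Finset.mem_univ, true_and, Finset.ssubset_univ_iff]
      constructor
      · tauto
      · rintro ⟨hST, hp⟩
        refine ⟨fun h => hTu ?_, hST, hp⟩
        exact Finset.univ_subset_iff.1 (h ▸ hST)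
    rw [hset, count_same T hT]
  have hcB : ∀ T : Finset (Fin n), T.Nonempty → T ≠ univ →
      (A.filter (fun S => S ⊆ T ∧ T.card % 2 ≠ S.card % 2)).card = 2 ^ (T.card - 1) := by
    intro T hT hTu
    have hset : A.filter (fun S => S ⊆ T ∧ T.card % 2 ≠ S.card % 2)
        = T.powerset.filter (fun S => T.card % 2 ≠ S.card % 2) := by
      ext S
      simp only [hA, Finset.mem_filter, Finset.mem_powerset, Finset.mem_filter,
        Finset.mem_univ, true_and, Finset.ssubset_univ_iff]
      constructor
      · tauto
      · rintro ⟨hST, hp⟩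
        refine ⟨fun h => hTu ?_, hST, hp⟩
        exact Finset.univ_subset_iff.1 (h ▸ hST)
    rw [hset, count_diff T hT]
  -- count for T = univ, same parity
  have hcAu : (A.filter (fun S => S ⊆ univ ∧
      (univ : Finset (Fin n)).card % 2 = S.card % 2)).card = 2 ^ (n - 1) - 1 := by
    have hset : A.filter (fun S => S ⊆ univ ∧ (univ : Finset (Fin n)).card % 2 = S.card % 2)
        = ((univ : Finset (Fin n)).powerset.filter
            (fun S => (univ : Finset (Fin n)).card % 2 = S.card % 2)).erase univ := by
      ext S
      simp only [hA, Finset.mem_filter, Finset.mem_powerset, Finset.mem_erase,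
        Finset.mem_univ, true_and, Finset.ssubset_univ_iff]
    have hmem : (univ : Finset (Fin n)) ∈ (univ : Finset (Fin n)).powerset.filter
        (fun S => (univ : Finset (Fin n)).card % 2 = S.card % 2) := by
      simp [Finset.mem_filter, Finset.mem_powerset]
    rw [hset, Finset.card_erase_of_mem hmem, count_same univ huniv_nonempty, hcardu]
  -- count for T = univ, different parity
  have hcBu : (A.filter (fun S => S ⊆ univ ∧
      (univ : Finset (Fin n)).card % 2 ≠ S.card % 2)).card = 2 ^ (n - 1) := by
    have hset : A.filter (fun S => S ⊆ univ ∧ (univ : Finset (Fin n)).card % 2 ≠ S.card % 2)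
        = (univ : Finset (Fin n)).powerset.filter
            (fun S => (univ : Finset (Fin n)).card % 2 ≠ S.card % 2) := by
      ext S
      simp only [hA, Finset.mem_filter, Finset.mem_powerset, Finset.mem_univ, true_and,
        Finset.ssubset_univ_iff]
      constructor
      · tauto
      · rintro ⟨hSu, hp⟩
        refine ⟨fun h => hp ?_, hSu, hp⟩
        rw [h]
    rw [hset, count_diff univ huniv_nonempty, hcardu]
  -- split the sums
  have humem : (univ : Finset (Fin n)) ∈ (univ : Finset (Finset (Fin n))) := Finset.mem_univ _
  have hemem : (∅ : Finset (Fin n)) ∈ ((univ : Finset (Finset (Fin n))).erase univ) :=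
    Finset.mem_erase.2 ⟨Ne.symm huniv_ne, Finset.mem_univ _⟩
  set E : Finset (Finset (Fin n)) :=
    (((univ : Finset (Finset (Fin n))).erase univ).erase ∅) with hE
  have hEprop : ∀ T ∈ E, T.Nonempty ∧ T ≠ univ := by
    intro T hT
    rw [hE] at hT
    simp only [Finset.mem_erase] at hT
    exact ⟨Finset.nonempty_iff_ne_empty.2 hT.1, hT.2.1⟩
  have splitL : ∑ T ∈ (univ : Finset (Finset (Fin n))),
      ((A.filter (fun S => S ⊆ T ∧ T.card % 2 = S.card % 2)).card : ℤ) * hb T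
      = ((2:ℤ) ^ (n-1) - 1) * hb univ + ∑ T ∈ E, (2:ℤ) ^ (T.card - 1) * hb T := by
    rw [← Finset.add_sum_erase _ _ humem, ← Finset.add_sum_erase _ _ hemem]
    have h1 : ((A.filter (fun S => S ⊆ univ ∧
        (univ : Finset (Fin n)).card % 2 = S.card % 2)).card : ℤ) = (2:ℤ) ^ (n-1) - 1 := by
      rw [hcAu]
      have : 1 ≤ 2 ^ (n-1) := Nat.one_le_two_pow
      push_cast [this]
      ring
    rw [h1, hb0, mul_zero, zero_add]
    congr 1
    refine Finset.sum_congr rfl fun T hT => ?_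
    obtain ⟨hTne, hTu⟩ := hEprop T hT
    rw [hcA T hTne hTu]
    push_cast
    ring
  have splitR : ∑ T ∈ (univ : Finset (Finset (Fin n))),
      ((A.filter (fun S => S ⊆ T ∧ T.card % 2 ≠ S.card % 2)).card : ℤ) * lb T
      = ((2:ℤ) ^ (n-1)) * lb univ + ∑ T ∈ E, (2:ℤ) ^ (T.card - 1) * lb T := by
    rw [← Finset.add_sum_erase _ _ humem, ← Finset.add_sum_erase _ _ hemem]
    have h1 : ((A.filter (fun S => S ⊆ univ ∧
        (univ : Finset (Fin n)).card % 2 ≠ S.card % 2)).card : ℤ) = (2:ℤ) ^ (n-1) := by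
      rw [hcBu]; push_cast; ring
    rw [h1, lb0, mul_zero, zero_add]
    congr 1
    refine Finset.sum_congr rfl fun T hT => ?_
    obtain ⟨hTne, hTu⟩ := hEprop T hT
    rw [hcB T hTne hTu]
    push_cast
    ring
  rw [splitL, splitR] at key
  -- use the contrast property
  have hsum : ∑ T ∈ E, (2:ℤ) ^ (T.card - 1) * lb T
      ≤ ∑ T ∈ E, (2:ℤ) ^ (T.card - 1) * hb T - ∑ T ∈ E, (2:ℤ) ^ (T.card - 1) := by
    rw [← Finset.sum_sub_distrib]
    refine Finset.sum_le_sum fun T hT => ?_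
    obtain ⟨hTne, hTu⟩ := hEprop T hT
    have hc := hcontrast T hTne hTu
    have hpos : (0:ℤ) ≤ (2:ℤ) ^ (T.card - 1) := by positivity
    nlinarith
  have hgoalset : (univ : Finset (Finset (Fin n))).filter
      (fun T : Finset (Fin n) => T.Nonempty ∧ T ≠ univ) = E := by
    ext T
    simp only [hE, Finset.mem_filter, Finset.mem_erase, Finset.mem_univ, true_and, and_true,
      Finset.nonempty_iff_ne_empty]
  rw [ge_iff_le, hgoalset]
  have hlu : (2:ℤ) ^ (n-1) * lb univ ≤ (2:ℤ) ^ (n-1) * hb univ :=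
    mul_le_mul_of_nonneg_left (hlh univ) (by positivity)
  linarith
end

section
/- Let $n\ge 2$ be even, $r_T$ defined by $r_T = \overline{h}_T$ for $|T|$ even and $r_T=\overline{l}_T$ for $|T|$ odd (shifted Droste values, as in the even-$n$ construction). Then $\sum_{T\subseteq\{1,\dots,n\},\ |T| \text{ odd}}\overline{l}_T - \sum_{T\subseteq\{1,\dots,n\},\ |T| \text{ even}}\overline{h}_T = -1$, i.e. the solution $x_{\{1,\dots,n\}}=\sum_{T\subseteq\{1,\dots,n\}}(-1)^{|T|+1}r_T$ of $Mx=r$ equals $-1$. -/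
open Finset

lemma L1 {α : Type*} [DecidableEq α] (S : Finset α) :
    ∑ T ∈ S.powerset, (-1:ℤ)^T.card * 2^(S.card - T.card) = 1 := by
  have h := Finset.prod_add (fun _ : α => (-1:ℤ)) (fun _ => 2) S
  simp only [prod_const] at h
  norm_num at h
  have h2 : ∑ T ∈ S.powerset, (-1:ℤ)^T.card * 2^(S.card - T.card)
      = ∑ T ∈ S.powerset, (-1:ℤ)^T.card * 2^((S \ T).card) := by
    apply Finset.sum_congr rfl
    intro T hT
    rw [Finset.card_sdiff_of_subset (Finset.mem_powerset.mp hT)]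
  rw [h2, ← h]

lemma L2 {α : Type*} [DecidableEq α] (S : Finset α) (hS : S.Nonempty) :
    2 * ∑ T ∈ S.powerset.filter (fun T => T.Nonempty ∧ T ≠ S),
        (-1:ℤ)^(T.card+1) * 2^(S.card - 1 - T.card)
      = 2^S.card + (-1:ℤ)^S.card - 1 := by
  rw [Finset.mul_sum]
  have step : ∀ T ∈ S.powerset.filter (fun T => T.Nonempty ∧ T ≠ S),
      (2:ℤ) * ((-1:ℤ)^(T.card+1) * 2^(S.card - 1 - T.card))
        = -((-1:ℤ)^T.card * 2^(S.card - T.card)) := by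
    intro T hT
    simp only [mem_filter, mem_powerset] at hT
    have hlt : T.card < S.card :=
      Finset.card_lt_card (Finset.ssubset_iff_subset_ne.mpr ⟨hT.1, hT.2.2⟩)
    have he : S.card - T.card = (S.card - 1 - T.card) + 1 := by omega
    rw [he, pow_succ, pow_succ]
    ring
  rw [Finset.sum_congr rfl step, Finset.sum_neg_distrib]
  have hsplit := Finset.sum_filter_add_sum_filter_not S.powerset
    (fun T => T.Nonempty ∧ T ≠ S) (fun T => (-1:ℤ)^T.card * 2^(S.card - T.card))
  rw [L1] at hsplit
  have hfil : S.powerset.filter (fun T => ¬(T.Nonempty ∧ T ≠ S)) = {∅, S} := by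
    ext T
    simp only [mem_filter, mem_powerset, mem_insert, mem_singleton,
      Finset.nonempty_iff_ne_empty, not_and, not_not]
    constructor
    · rintro ⟨hsub, hc⟩
      by_cases hT : T = ∅
      · exact Or.inl hT
      · exact Or.inr (hc hT)
    · rintro (rfl | rfl)
      · exact ⟨Finset.empty_subset _, fun hcon => absurd rfl hcon⟩
      · exact ⟨Finset.Subset.refl _, fun _ => rfl⟩
  rw [hfil] at hsplit
  rw [Finset.sum_pair (fun hcon => hS.ne_empty hcon.symm)] at hsplit
  simp only [card_empty, pow_zero, one_mul, Nat.sub_zero, Nat.sub_self] at hsplit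
  linarith

def gg (n : ℕ) (δ : Finset (Fin n) → ℤ) (T : Finset (Fin n)) : ℤ :=
  ∑ T' ∈ univ.filter (fun T' : Finset (Fin n) => T ⊂ T'), δ T' * 2 ^ (T'.card - 1 - T.card)

lemma key_swap (n : ℕ) (hn : 2 ≤ n) (hev : Even n) (δ : Finset (Fin n) → ℤ)
    (hδ1 : ∀ T : Finset (Fin n), T.Nonempty → T ≠ univ → δ T = 1)
    (hδ2 : δ univ = 0) :
    2 * ∑ T ∈ univ.filter (fun T : Finset (Fin n) => T.Nonempty),
        (-1:ℤ)^(T.card+1) * gg n δ T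
      = 2 * (∑ T' ∈ univ.filter (fun T' : Finset (Fin n) => T'.Nonempty),
          δ T' * 2 ^ (T'.card - 1)) - 2^n := by
  have hunivne : (univ : Finset (Fin n)).Nonempty := by
    rw [← Finset.card_pos]; simp; omega
  have hcardu : (univ : Finset (Fin n)).card = n := by simp
  -- step 1: rewrite as double sum with ifs
  have h1 : ∑ T ∈ univ.filter (fun T : Finset (Fin n) => T.Nonempty),
        (-1:ℤ)^(T.card+1) * gg n δ T
      = ∑ T : Finset (Fin n), ∑ T' : Finset (Fin n),
          (if T.Nonempty ∧ T ⊂ T' then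
            (-1:ℤ)^(T.card+1) * (δ T' * 2 ^ (T'.card - 1 - T.card)) else 0) := by
    rw [Finset.sum_filter]
    apply Finset.sum_congr rfl
    intro T _
    by_cases hT : T.Nonempty
    · simp only [hT, if_true, true_and]
      rw [gg, Finset.mul_sum, Finset.sum_filter]
    · simp [hT]
  rw [h1, Finset.sum_comm]
  have h2 : ∀ T' : Finset (Fin n),
      2 * (∑ T : Finset (Fin n), if T.Nonempty ∧ T ⊂ T' then
            (-1:ℤ)^(T.card+1) * (δ T' * 2 ^ (T'.card - 1 - T.card)) else 0)
      = if T'.Nonempty then δ T' * (2^T'.card + (-1:ℤ)^T'.card - 1) else 0 := by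
    intro T'
    rw [← Finset.sum_filter]
    have hset : univ.filter (fun T : Finset (Fin n) => T.Nonempty ∧ T ⊂ T')
        = T'.powerset.filter (fun T => T.Nonempty ∧ T ≠ T') := by
      ext T
      simp only [mem_filter, mem_univ, true_and, mem_powerset,
        Finset.ssubset_iff_subset_ne]
      tauto
    rw [hset]
    by_cases hT' : T'.Nonempty
    · rw [if_pos hT', ← L2 T' hT', Finset.mul_sum, Finset.mul_sum, Finset.mul_sum]
      apply Finset.sum_congr rfl
      intro T _
      ring
    · rw [if_neg hT']
      have : T' = ∅ := Finset.not_nonempty_iff_eq_empty.mp hT'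
      subst this
      rw [mul_eq_zero]
      right
      apply Finset.sum_eq_zero
      intro x hx
      simp only [Finset.mem_filter, Finset.mem_powerset, Finset.subset_empty,
        Finset.nonempty_iff_ne_empty] at hx
      tauto
  rw [Finset.mul_sum, Finset.sum_congr rfl (fun T' _ => h2 T'), ← Finset.sum_filter]
  -- now : ∑ T' ∈ N, δ T' * (2^c + (-1)^c - 1) = 2*C - 2^n
  set N : Finset (Finset (Fin n)) := univ.filter (fun T : Finset (Fin n) => T.Nonempty) with hN
  have hmemN : (univ : Finset (Fin n)) ∈ N := by
    rw [hN, Finset.mem_filter]; exact ⟨Finset.mem_univ _, hunivne⟩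
  -- split out univ, where δ = 0
  have split1 : ∀ f : Finset (Fin n) → ℤ, ∑ T' ∈ N, f T' = f univ + ∑ T' ∈ N.erase univ, f T' :=
    fun f => (Finset.add_sum_erase N f hmemN).symm
  rw [split1 (fun T' => δ T' * (2^T'.card + (-1:ℤ)^T'.card - 1))]
  have hsplit0 : ∀ f : Finset (Fin n) → ℤ,
      ∑ T ∈ (univ : Finset (Finset (Fin n))), f T = f ∅ + ∑ T ∈ N, f T := by
    intro f
    have hadd := Finset.sum_filter_add_sum_filter_not (univ : Finset (Finset (Fin n)))
      (fun T => T.Nonempty) f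
    have hFe : (univ : Finset (Finset (Fin n))).filter (fun T => ¬ T.Nonempty) = {∅} := by
      ext T; simp [Finset.not_nonempty_iff_eq_empty]
    rw [hFe, Finset.sum_singleton] at hadd
    rw [← hadd, hN]; ring
  have halt : ∑ T ∈ (univ : Finset (Finset (Fin n))), (-1:ℤ)^T.card = 0 := by
    rw [← Finset.powerset_univ, Finset.sum_powerset_neg_one_pow_card]
    simp [hunivne.ne_empty]
  have hcardtot : ∑ T ∈ (univ : Finset (Finset (Fin n))), (1:ℤ) = 2^n := by
    rw [Finset.sum_const, Finset.card_univ]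
    simp [Fintype.card_finset]
  have hs2 : ∑ T ∈ N, (-1:ℤ)^T.card = -1 := by
    have := hsplit0 (fun T => (-1:ℤ)^T.card)
    simp only [card_empty, pow_zero] at this
    linarith [halt]
  have hs3 : ∑ T ∈ N, (1:ℤ) = 2^n - 1 := by
    have := hsplit0 (fun _ => (1:ℤ))
    linarith [hcardtot]
  -- membership facts on N.erase univ
  have hmemE : ∀ T' ∈ N.erase univ, δ T' = 1 := by
    intro T' hT'
    have h1' := Finset.mem_of_mem_erase hT'
    rw [hN, Finset.mem_filter] at h1'
    exact hδ1 T' h1'.2 (Finset.ne_of_mem_erase hT')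
  have hcpos : ∀ T' ∈ N, T'.card - 1 + 1 = T'.card := by
    intro T' hT'
    rw [hN, Finset.mem_filter] at hT'
    have := Finset.card_pos.mpr hT'.2
    omega
  have hpown : (2:ℤ)^n = 2^(n-1) * 2 := by
    rw [← pow_succ]
    congr 1
    omega
  -- relate C to sums
  have hC1 : ∑ T' ∈ N, δ T' * 2^(T'.card - 1)
      = ∑ T' ∈ N.erase univ, 2^(T'.card - 1) := by
    rw [split1 (fun T' => δ T' * 2^(T'.card-1)), hδ2, zero_mul, zero_add]
    exact Finset.sum_congr rfl (fun T' hT' => by rw [hmemE T' hT', one_mul])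
  have hC2 : ∑ T' ∈ N, (2:ℤ)^(T'.card - 1)
      = 2^(n-1) + ∑ T' ∈ N.erase univ, 2^(T'.card - 1) := by
    rw [split1 (fun T' => (2:ℤ)^(T'.card-1)), hcardu]
  have hC3 : ∑ T' ∈ N, (2:ℤ)^T'.card = 2 * ∑ T' ∈ N, (2:ℤ)^(T'.card - 1) := by
    rw [Finset.mul_sum]
    apply Finset.sum_congr rfl
    intro T' hT'
    have hc := hcpos T' hT'
    calc (2:ℤ)^T'.card = 2^(T'.card - 1 + 1) := by rw [hc]
      _ = 2 * 2^(T'.card - 1) := by rw [pow_succ]; ring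
  -- the main sum over N.erase univ
  have hmain : ∑ T' ∈ N.erase univ, δ T' * (2^T'.card + (-1:ℤ)^T'.card - 1)
      = ∑ T' ∈ N.erase univ, (2^T'.card + (-1:ℤ)^T'.card - 1) :=
    Finset.sum_congr rfl (fun T' hT' => by rw [hmemE T' hT', one_mul])
  have hsplit2 := split1 (fun T' => (2:ℤ)^T'.card + (-1:ℤ)^T'.card - 1)
  have hdist : ∑ T' ∈ N, ((2:ℤ)^T'.card + (-1:ℤ)^T'.card - 1)
      = (∑ T' ∈ N, (2:ℤ)^T'.card) + (∑ T' ∈ N, (-1:ℤ)^T'.card) - ∑ T' ∈ N, (1:ℤ) := by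
    rw [Finset.sum_sub_distrib, Finset.sum_add_distrib]
  have hneg1n : (-1:ℤ)^n = 1 := hev.neg_one_pow
  rw [hδ2, zero_mul, zero_add, hmain]
  simp only [hcardu] at hsplit2
  linarith [hC1, hC2, hC3, hs2, hs3, hsplit2, hdist, hpown]


/-- For even `n`, with the shifted Droste values, the worst-case solution entry
`x_{{1,…,n}} = ∑_{|T| odd} l̄_T - ∑_{|T| even} h̄_T` equals `-1`. -/
theorem worst_case_entry (n : ℕ) (hn : 2 ≤ n) (hev : Even n)
    (δ h hb lb : Finset (Fin n) → ℤ)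
    (hδ1 : ∀ T : Finset (Fin n), T.Nonempty → T ≠ univ → δ T = 1)
    (hδ2 : δ univ = 0)
    (hh : ∀ T : Finset (Fin n), T.Nonempty →
      h T = (∑ T' ∈ univ.filter (fun T' : Finset (Fin n) => T'.Nonempty),
              δ T' * 2 ^ (T'.card - 1)) -
            ∑ T' ∈ univ.filter (fun T' : Finset (Fin n) => T ⊂ T'),
              δ T' * 2 ^ (T'.card - 1 - T.card))
    (hhb : ∀ T : Finset (Fin n), T.Nonempty → hb T = h T - 1)
    (hlb : ∀ T : Finset (Fin n), T.Nonempty → lb T = h T - δ T - 1)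
    (hb0 : hb ∅ = 0) (lb0 : lb ∅ = 0) :
    (∑ T ∈ univ.filter (fun T : Finset (Fin n) => ¬ Even T.card), lb T) -
      ∑ T ∈ univ.filter (fun T : Finset (Fin n) => Even T.card), hb T = -1 := by
  have hunivne : (univ : Finset (Fin n)).Nonempty := by
    rw [← Finset.card_pos]; simp; omega
  have hcardu : (univ : Finset (Fin n)).card = n := by simp
  set O : Finset (Finset (Fin n)) :=
    univ.filter (fun T : Finset (Fin n) => ¬ Even T.card) with hOdef
  set E : Finset (Finset (Fin n)) :=
    univ.filter (fun T : Finset (Fin n) => Even T.card) with hEdef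
  set N : Finset (Finset (Fin n)) :=
    univ.filter (fun T : Finset (Fin n) => T.Nonempty) with hNdef
  set C : ℤ := ∑ T' ∈ N, δ T' * 2 ^ (T'.card - 1) with hCdef
  -- facts about members of O
  have hOfact : ∀ T ∈ O, T.Nonempty ∧ T ≠ univ := by
    intro T hT
    rw [hOdef, Finset.mem_filter] at hT
    have hodd : ¬ Even T.card := hT.2
    constructor
    · rw [← Finset.card_pos]
      rcases Nat.eq_zero_or_pos T.card with h0 | h0
      · exact absurd (h0 ▸ Even.zero) hodd
      · exact h0
    · intro hEq
      apply hodd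
      rw [hEq, hcardu]
      exact hev
  -- rewrite the odd sum
  have e1 : ∑ T ∈ O, lb T = ∑ T ∈ O, (C - gg n δ T - 2) := by
    apply Finset.sum_congr rfl
    intro T hT
    obtain ⟨hne, hTu⟩ := hOfact T hT
    rw [hlb T hne, hh T hne, hδ1 T hne hTu, gg]
    ring
  -- rewrite the even sum
  have hmemE0 : (∅ : Finset (Fin n)) ∈ E := by
    rw [hEdef, Finset.mem_filter]
    exact ⟨Finset.mem_univ _, by simp⟩
  have e2 : ∑ T ∈ E, hb T = ∑ T ∈ E.erase ∅, hb T := by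
    rw [← Finset.add_sum_erase E hb hmemE0, hb0, zero_add]
  have e3 : ∑ T ∈ E.erase ∅, hb T = ∑ T ∈ E.erase ∅, (C - gg n δ T - 1) := by
    apply Finset.sum_congr rfl
    intro T hT
    have hne : T.Nonempty :=
      Finset.nonempty_iff_ne_empty.mpr (Finset.ne_of_mem_erase hT)
    rw [hhb T hne, hh T hne, gg]
  -- counting facts
  have halt : ∑ T ∈ (univ : Finset (Finset (Fin n))), (-1:ℤ)^T.card = 0 := by
    rw [← Finset.powerset_univ, Finset.sum_powerset_neg_one_pow_card]
    simp [hunivne.ne_empty]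
  have hcardtot : ∑ T ∈ (univ : Finset (Finset (Fin n))), (1:ℤ) = 2^n := by
    rw [Finset.sum_const, Finset.card_univ]
    simp [Fintype.card_finset]
  have hcount1 : (∑ T ∈ E, (1:ℤ)) + ∑ T ∈ O, (1:ℤ) = 2^n := by
    rw [hEdef, hOdef, Finset.sum_filter_add_sum_filter_not (univ : Finset (Finset (Fin n)))
      (fun T : Finset (Fin n) => Even T.card) (fun _ => (1:ℤ))]
    exact hcardtot
  have hcount2 : (∑ T ∈ E, (1:ℤ)) - ∑ T ∈ O, (1:ℤ) = 0 := by
    have hsplit := Finset.sum_filter_add_sum_filter_not (univ : Finset (Finset (Fin n)))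
      (fun T : Finset (Fin n) => Even T.card) (fun T => (-1:ℤ)^T.card)
    rw [← hEdef, ← hOdef] at hsplit
    have hEv : ∑ T ∈ E, (-1:ℤ)^T.card = ∑ T ∈ E, (1:ℤ) := by
      apply Finset.sum_congr rfl
      intro T hT
      rw [hEdef, Finset.mem_filter] at hT
      exact hT.2.neg_one_pow
    have hOd : ∑ T ∈ O, (-1:ℤ)^T.card = ∑ T ∈ O, (-1:ℤ) := by
      apply Finset.sum_congr rfl
      intro T hT
      rw [hOdef, Finset.mem_filter] at hT
      exact (Nat.not_even_iff_odd.mp hT.2).neg_one_pow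
    rw [hEv, hOd, halt] at hsplit
    have hneg : ∑ _T ∈ O, (-1:ℤ) = - ∑ _T ∈ O, (1:ℤ) := by simp
    rw [hneg] at hsplit
    linarith
  have hcount3 : (∑ T ∈ E, (1:ℤ)) = 1 + ∑ T ∈ E.erase ∅, (1:ℤ) :=
    (Finset.add_sum_erase E (fun _ => (1:ℤ)) hmemE0).symm
  -- splitting N into O and E.erase ∅
  have hNE : N.filter (fun T => Even T.card) = E.erase ∅ := by
    rw [hNdef, hEdef]
    ext T
    simp only [Finset.mem_filter, Finset.mem_erase, Finset.mem_univ, true_and,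
      Finset.nonempty_iff_ne_empty]
  have hNO : N.filter (fun T => ¬ Even T.card) = O := by
    rw [hNdef, hOdef]
    ext T
    simp only [Finset.mem_filter, Finset.mem_univ, true_and,
      Finset.nonempty_iff_ne_empty]
    constructor
    · rintro ⟨_, h2⟩; exact h2
    · intro h2
      refine ⟨?_, h2⟩
      intro h0
      apply h2
      rw [h0]
      simp
  have hsplitN : ∑ T ∈ N, (-1:ℤ)^(T.card+1) * gg n δ T
      = (∑ T ∈ O, gg n δ T) - ∑ T ∈ E.erase ∅, gg n δ T := by
    have hNsplit := Finset.sum_filter_add_sum_filter_not N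
      (fun T : Finset (Fin n) => Even T.card) (fun T => (-1:ℤ)^(T.card+1) * gg n δ T)
    rw [hNE, hNO] at hNsplit
    have hA : ∑ T ∈ E.erase ∅, (-1:ℤ)^(T.card+1) * gg n δ T
        = - ∑ T ∈ E.erase ∅, gg n δ T := by
      rw [← Finset.sum_neg_distrib]
      apply Finset.sum_congr rfl
      intro T hT
      have hT2 := Finset.mem_of_mem_erase hT
      rw [hEdef, Finset.mem_filter] at hT2
      rw [pow_succ, hT2.2.neg_one_pow]
      ring
    have hB : ∑ T ∈ O, (-1:ℤ)^(T.card+1) * gg n δ T = ∑ T ∈ O, gg n δ T := by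
      apply Finset.sum_congr rfl
      intro T hT
      rw [hOdef, Finset.mem_filter] at hT
      rw [pow_succ, (Nat.not_even_iff_odd.mp hT.2).neg_one_pow]
      ring
    rw [hA, hB] at hNsplit
    linarith
  have hkey := key_swap n hn hev δ hδ1 hδ2
  rw [← hNdef, ← hCdef, hsplitN] at hkey
  -- expansion of constant sums
  have hconst : ∀ (s : Finset (Finset (Fin n))) (k : ℤ),
      (∑ _T ∈ s, k) = k * ∑ _T ∈ s, (1:ℤ) := by
    intro s k
    rw [Finset.mul_sum]
    simp
  have hexp1 : ∑ T ∈ O, (C - gg n δ T - 2)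
      = C * (∑ T ∈ O, (1:ℤ)) - (∑ T ∈ O, gg n δ T) - 2 * ∑ T ∈ O, (1:ℤ) := by
    rw [Finset.sum_sub_distrib, Finset.sum_sub_distrib, hconst O C, hconst O 2]
  have hexp2 : ∑ T ∈ E.erase ∅, (C - gg n δ T - 1)
      = C * (∑ T ∈ E.erase ∅, (1:ℤ)) - (∑ T ∈ E.erase ∅, gg n δ T)
        - ∑ T ∈ E.erase ∅, (1:ℤ) := by
    rw [Finset.sum_sub_distrib, Finset.sum_sub_distrib, hconst (E.erase ∅) C]
  -- final arithmetic
  have f3 : (∑ T ∈ O, gg n δ T) - (∑ T ∈ E.erase ∅, gg n δ T)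
      = C - ∑ T ∈ E, (1:ℤ) := by
    linarith [hkey, hcount1, hcount2]
  rw [e1, e2, e3, hexp1, hexp2]
  linear_combination (2 - C) * hcount2 + (C - 1) * hcount3 - f3
end
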